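/- arXiv:2108.00258 — 4 statements merged into one kernel-verified Lean document; each statement's English description precedes it below -/
import Mathlib

section
/- Let K ⊂ 𝔻 be a set that is closed in 𝔻, and suppose there exists r₀ ∈ [0, 1) such that K ∩ 𝕊¹(r) ≠ ∅ for every r ∈ (r₀, 1), where 𝕊¹(r) is the circle of radius r centered at the origin. Then the conformal capacity cap(K ∩ closure(𝔻(r)), 𝔻) tends to infinity as r → 1, where 𝔻(r) is the open disk of radius r centered at the origin. -/
open MeasureTheory Metric Set Filter Topology

noncomputable section

/-- The open unit disk in the complex plane. -/
def unitDisk : Set ℂ := Metric.ball 0 1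

/-- The unit circle in the complex plane. -/
def unitCircle : Set ℂ := Metric.sphere 0 1

/-- `g` is a distributional (weak) partial derivative of `h` on `Ω` in the direction `v`:
integration by parts against smooth test functions compactly supported in `Ω`. -/
def HasWeakPartialDeriv (Ω : Set ℂ) (h g : ℂ → ℂ) (v : ℂ) : Prop :=
  ∀ φ : ℂ → ℝ, ContDiff ℝ (⊤ : ℕ∞) φ → HasCompactSupport φ → tsupport φ ⊆ Ω →
    ∫ z in Ω, (fderiv ℝ φ z v) • h z = - ∫ z in Ω, φ z • g z

/-- Membership in the Sobolev space `W^{1,2}(Ω, ℂ)`: the map and both weak partial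
derivatives are in `L²(Ω)`. -/
def MemW12 (Ω : Set ℂ) (h : ℂ → ℂ) : Prop :=
  MemLp h 2 (volume.restrict Ω) ∧
  ∃ gx gy : ℂ → ℂ, HasWeakPartialDeriv Ω h gx 1 ∧ HasWeakPartialDeriv Ω h gy Complex.I ∧
    MemLp gx 2 (volume.restrict Ω) ∧ MemLp gy 2 (volume.restrict Ω)

/-- Membership in `W^{1,2}_loc(Ω, ℂ)`. -/
def MemW12loc (Ω : Set ℂ) (h : ℂ → ℂ) : Prop :=
  ∀ z ∈ Ω, ∃ ε > 0, Metric.ball z ε ⊆ Ω ∧ MemW12 (Metric.ball z ε) h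

/-- Membership in `W^{1,2}_0(Ω, ℂ)`: the closure of smooth compactly supported maps in
the `W^{1,2}`-norm, expressed via an approximating sequence. -/
def MemW120 (Ω : Set ℂ) (h : ℂ → ℂ) : Prop :=
  ∃ gx gy : ℂ → ℂ,
    HasWeakPartialDeriv Ω h gx 1 ∧ HasWeakPartialDeriv Ω h gy Complex.I ∧
    MemLp h 2 (volume.restrict Ω) ∧ MemLp gx 2 (volume.restrict Ω) ∧
    MemLp gy 2 (volume.restrict Ω) ∧
    ∃ φ : ℕ → ℂ → ℂ,
      (∀ n, ContDiff ℝ (⊤ : ℕ∞) (φ n) ∧ HasCompactSupport (φ n) ∧ tsupport (φ n) ⊆ Ω) ∧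
      Tendsto (fun n => eLpNorm (fun z => h z - φ n z) 2 (volume.restrict Ω)) atTop (nhds 0) ∧
      Tendsto (fun n => eLpNorm (fun z => gx z - fderiv ℝ (φ n) z 1) 2 (volume.restrict Ω))
        atTop (nhds 0) ∧
      Tendsto (fun n => eLpNorm (fun z => gy z - fderiv ℝ (φ n) z Complex.I) 2
        (volume.restrict Ω)) atTop (nhds 0)

/-- The Wirtinger derivative `∂h/∂z` computed from the partial derivatives
`gx = ∂h/∂x` and `gy = ∂h/∂y`. -/
def wirtZ (gx gy : ℂ → ℂ) (z : ℂ) : ℂ := (gx z - Complex.I * gy z) / 2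

/-- The Wirtinger derivative `∂h/∂z̄` computed from the partial derivatives
`gx = ∂h/∂x` and `gy = ∂h/∂y`. -/
def wirtZBar (gx gy : ℂ → ℂ) (z : ℂ) : ℂ := (gx z + Complex.I * gy z) / 2

/-- The Jacobian determinant `J_h = |h_z|² - |h_z̄|²` computed from the partial
derivatives `gx = ∂h/∂x` and `gy = ∂h/∂y`. -/
def jacDet (gx gy : ℂ → ℂ) (z : ℂ) : ℝ :=
  ‖wirtZ gx gy z‖ ^ 2 - ‖wirtZBar gx gy z‖ ^ 2

/-- `J_h ≥ 0` almost everywhere on `Ω` (with respect to a weak gradient of `h`). -/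
def JacNonnegAE (Ω : Set ℂ) (h : ℂ → ℂ) : Prop :=
  ∃ gx gy : ℂ → ℂ, HasWeakPartialDeriv Ω h gx 1 ∧ HasWeakPartialDeriv Ω h gy Complex.I ∧
    ∀ᵐ z ∂(volume.restrict Ω), 0 ≤ jacDet gx gy z

/-- The Wirtinger derivative `∂ψ/∂z̄` of a (smooth) map `ψ`. -/
def dzbar (ψ : ℂ → ℂ) (z : ℂ) : ℂ :=
  (fderiv ℝ ψ z 1 + Complex.I * fderiv ℝ ψ z Complex.I) / 2

/-- `h` satisfies the Hopf-Laplace equation `∂_z̄ (h_z ⬝ conj h_z̄) = 0` on `Ω` in the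
sense of distributions. -/
def SatisfiesHopfLaplace (Ω : Set ℂ) (h : ℂ → ℂ) : Prop :=
  ∃ gx gy : ℂ → ℂ, HasWeakPartialDeriv Ω h gx 1 ∧ HasWeakPartialDeriv Ω h gy Complex.I ∧
    ∀ ψ : ℂ → ℂ, ContDiff ℝ (⊤ : ℕ∞) ψ → HasCompactSupport ψ → tsupport ψ ⊆ Ω →
      ∫ z in Ω, (wirtZ gx gy z * (starRingEnd ℂ) (wirtZBar gx gy z)) * dzbar ψ z = 0

/-- `f` restricts to a homeomorphism of `A` onto `B`. -/
def IsHomeoOn (f : ℂ → ℂ) (A B : Set ℂ) : Prop :=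
  ContinuousOn f A ∧ Set.BijOn f A B ∧
    ∃ g : ℂ → ℂ, ContinuousOn g B ∧ (∀ x ∈ A, g (f x) = x) ∧ ∀ y ∈ B, f (g y) = y

/-- A Jordan domain: a bounded, simply connected planar domain whose boundary is a
Jordan curve (a homeomorphic image of the circle). -/
def IsJordanDomain (X : Set ℂ) : Prop :=
  IsOpen X ∧ Bornology.IsBounded X ∧ IsConnected X ∧ SimplyConnectedSpace ↥X ∧
    ∃ φ : ℂ → ℂ, ContinuousOn φ unitCircle ∧ Set.InjOn φ unitCircle ∧
      φ '' unitCircle = frontier X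

/-- A domain is Lipschitz if its boundary is locally the graph of a Lipschitz function
(up to a rigid motion of the plane). -/
def IsLipschitzDomain (Y : Set ℂ) : Prop :=
  ∀ p ∈ frontier Y, ∃ (e : ℂ ≃ᵢ ℂ) (r : ℝ) (L : NNReal) (φ : ℝ → ℝ),
    0 < r ∧ LipschitzWith L φ ∧ e p = 0 ∧
    ∀ z ∈ Metric.ball (0 : ℂ) r, (e.symm z ∈ Y ↔ φ z.re < z.im)

/-- `h` satisfies the Lusin (N) condition on `Ω`: sets of measure zero are mapped to
sets of measure zero. -/
def LusinN (Ω : Set ℂ) (h : ℂ → ℂ) : Prop :=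
  ∀ E ⊆ Ω, volume E = 0 → volume (h '' E) = 0

/-- The pointwise Jacobian determinant of a (smooth) map `g : ℂ → ℂ` viewed as a map
of the plane. -/
def realJac (g : ℂ → ℂ) (z : ℂ) : ℝ :=
  (fderiv ℝ g z 1).re * (fderiv ℝ g z Complex.I).im -
    (fderiv ℝ g z 1).im * (fderiv ℝ g z Complex.I).re

/-- `d` is the Brouwer degree of `h` at the point `y` with respect to the bounded open
set `U` (`h` continuous on `closure U`, `y ∉ h(∂U)`), characterized analytically: for
every smooth map `g` uniformly close to `h` on `closure U` and every smooth probability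
density `ψ` concentrated near `y`, the integral `∫_U ψ(g) J_g` equals `d`. -/
def HasDegreeAt (h : ℂ → ℂ) (y : ℂ) (U : Set ℂ) (d : ℤ) : Prop :=
  ∃ ε > 0, (∀ z ∈ frontier U, ε ≤ dist y (h z)) ∧
    ∀ g : ℂ → ℂ, ContDiff ℝ (⊤ : ℕ∞) g → (∀ z ∈ closure U, dist (g z) (h z) < ε / 2) →
      ∀ ψ : ℂ → ℝ, ContDiff ℝ (⊤ : ℕ∞) ψ → HasCompactSupport ψ →
        tsupport ψ ⊆ Metric.ball y (ε / 2) → (∫ w, ψ w) = 1 →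
        (∫ z in U, ψ (g z) * realJac g z) = (d : ℝ)

open Classical in
/-- The Dirichlet energy `∫_Ω |Dh|²` of a Sobolev map, computed from a (choice of)
weak gradient; weak gradients are a.e. unique, so the value does not depend on the
choice. -/
def dirichletEnergy (Ω : Set ℂ) (h : ℂ → ℂ) : ℝ :=
  if hW : ∃ p : (ℂ → ℂ) × (ℂ → ℂ),
      HasWeakPartialDeriv Ω h p.1 1 ∧ HasWeakPartialDeriv Ω h p.2 Complex.I then
    ∫ z in Ω, (‖hW.choose.1 z‖ ^ 2 + ‖hW.choose.2 z‖ ^ 2)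
  else 0

/-- The conformal capacity of the condenser `(K, U)`. -/
def conformalCapacity (K U : Set ℂ) : ℝ :=
  sInf {E : ℝ | ∃ u : ℂ → ℝ, ContDiff ℝ (⊤ : ℕ∞) u ∧ HasCompactSupport u ∧
    tsupport u ⊆ U ∧ (∀ z ∈ K, 1 ≤ u z) ∧ E = ∫ z in U, ‖fderiv ℝ u z‖ ^ 2}

/-- The `K`-oscillation property of a map `H` on an open set `U`. -/
def KOscillationProperty (K : ℝ) (U : Set ℂ) (H : ℂ → ℂ) : Prop :=
  ∀ z ∈ U, ∀ᵐ r ∂(volume.restrict (Set.Ioo (0 : ℝ) (Metric.infDist z Uᶜ))),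
    EMetric.diam (H '' Metric.ball z r) ≤
      ENNReal.ofReal K * EMetric.diam (H '' Metric.sphere z r)

/-- The set of connected components of a set `A`. -/
def componentsIn (A : Set ℂ) : Set (Set ℂ) := {C | ∃ x ∈ A, C = connectedComponentIn A x}

/-- There exist an open ball `B` and a nonempty connected component `U` of `h⁻¹(B)`
(in the unit disk) on which the Jacobian of `h` vanishes almost everywhere. -/
def HasZeroJacComponent (h : ℂ → ℂ) : Prop :=
  ∃ (y : ℂ) (r : ℝ) (x : ℂ) (gx gy : ℂ → ℂ), 0 < r ∧
    x ∈ unitDisk ∩ h ⁻¹' Metric.ball y r ∧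
    HasWeakPartialDeriv unitDisk h gx 1 ∧ HasWeakPartialDeriv unitDisk h gy Complex.I ∧
    ∀ᵐ z ∂(volume.restrict (connectedComponentIn (unitDisk ∩ h ⁻¹' Metric.ball y r) x)),
      jacDet gx gy z = 0

/-- The real interval `(a, b)` with extended-real endpoints. -/
def erealIoo (a b : EReal) : Set ℝ := {t : ℝ | a < (t : EReal) ∧ (t : EReal) < b}

/-- The filter describing `t → c` (where `c` is an endpoint, possibly infinite) within
the interval `(a, b)`. -/
def endpointFilter (a b c : EReal) : Filter ℝ :=
  Filter.comap (fun t : ℝ => (t : EReal)) (nhdsWithin c (Set.Ioo a b))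

/-- `γ : (a,b) → Ω` is a vertical arc of the quadratic differential `g dz ⊗ dz`:
a smooth curve with `g(γ(t))·γ'(t)² < 0` everywhere. -/
def IsVerticalArcOn (g : ℂ → ℂ) (Ω : Set ℂ) (a b : EReal) (γ : ℝ → ℂ) : Prop :=
  (∀ t ∈ erealIoo a b, γ t ∈ Ω) ∧ ContDiffOn ℝ (⊤ : ℕ∞) γ (erealIoo a b) ∧
    ∀ t ∈ erealIoo a b, ∃ c : ℝ, c < 0 ∧ g (γ t) * (deriv γ t) ^ 2 = (c : ℂ)

/-- `γ : (a,b) → Ω` is a horizontal arc of the quadratic differential `g dz ⊗ dz`: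
a smooth curve with `g(γ(t))·γ'(t)² > 0` everywhere. -/
def IsHorizontalArcOn (g : ℂ → ℂ) (Ω : Set ℂ) (a b : EReal) (γ : ℝ → ℂ) : Prop :=
  (∀ t ∈ erealIoo a b, γ t ∈ Ω) ∧ ContDiffOn ℝ (⊤ : ℕ∞) γ (erealIoo a b) ∧
    ∀ t ∈ erealIoo a b, ∃ c : ℝ, 0 < c ∧ g (γ t) * (deriv γ t) ^ 2 = (c : ℂ)

/-- A vertical trajectory: a maximal vertical arc. -/
def IsVerticalTrajectory (g : ℂ → ℂ) (Ω : Set ℂ) (a b : EReal) (γ : ℝ → ℂ) : Prop :=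
  IsVerticalArcOn g Ω a b γ ∧
    ∀ (a' b' : EReal) (γ' : ℝ → ℂ), IsVerticalArcOn g Ω a' b' γ' →
      a' ≤ a → b ≤ b' → Set.EqOn γ γ' (erealIoo a b) → a' = a ∧ b' = b

/-- A horizontal trajectory: a maximal horizontal arc. -/
def IsHorizontalTrajectory (g : ℂ → ℂ) (Ω : Set ℂ) (a b : EReal) (γ : ℝ → ℂ) : Prop :=
  IsHorizontalArcOn g Ω a b γ ∧
    ∀ (a' b' : EReal) (γ' : ℝ → ℂ), IsHorizontalArcOn g Ω a' b' γ' →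
      a' ≤ a → b ≤ b' → Set.EqOn γ γ' (erealIoo a b) → a' = a ∧ b' = b

/-- The arc `γ` exits a critical point (a zero of the coefficient `g`) of the
quadratic differential at one of its endpoints. -/
def ExitsCriticalPoint (g : ℂ → ℂ) (Ω : Set ℂ) (a b : EReal) (γ : ℝ → ℂ) : Prop :=
  ∃ z ∈ Ω, g z = 0 ∧
    (Tendsto γ (endpointFilter a b a) (nhds z) ∨ Tendsto γ (endpointFilter a b b) (nhds z))



section CapAux

open Real

private lemma hasDerivAt_rad {u : ℂ → ℝ} (hu : Differentiable ℝ u) (θ s : ℝ) :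
    HasDerivAt (fun s' : ℝ => u ((s' : ℂ) * Complex.exp ((θ : ℂ) * Complex.I)))
      ((fderiv ℝ u ((s : ℂ) * Complex.exp ((θ : ℂ) * Complex.I)))
        (Complex.exp ((θ : ℂ) * Complex.I))) s := by
  have h1 : HasDerivAt (fun s' : ℝ => ((s' : ℂ) * Complex.exp ((θ : ℂ) * Complex.I)))
      (Complex.exp ((θ : ℂ) * Complex.I)) s := by
    simpa using (Complex.ofRealCLM.hasDerivAt (x := s)).mul_const
      (Complex.exp ((θ : ℂ) * Complex.I))
  exact ((hu _).hasFDerivAt.comp_hasDerivAt s h1)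

private lemma hasDerivAt_ang {u : ℂ → ℝ} (hu : Differentiable ℝ u) (t φ : ℝ) :
    HasDerivAt (fun φ' : ℝ => u ((t : ℂ) * Complex.exp ((φ' : ℂ) * Complex.I)))
      ((fderiv ℝ u ((t : ℂ) * Complex.exp ((φ : ℂ) * Complex.I)))
        ((t : ℂ) * (Complex.exp ((φ : ℂ) * Complex.I) * Complex.I))) φ := by
  have h0 : HasDerivAt (fun φ' : ℝ => ((φ' : ℂ) * Complex.I)) Complex.I φ := by
    simpa using (Complex.ofRealCLM.hasDerivAt (x := φ)).mul_const Complex.I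
  have h2 := (h0.cexp.const_mul ((t : ℂ)))
  exact ((hu _).hasFDerivAt.comp_hasDerivAt φ h2)

private lemma cont_curve (t θ : ℝ) :
    Continuous (fun p : ℝ × ℝ => ((p.1 : ℂ) * Complex.exp ((p.2 : ℂ) * Complex.I))) := by
  fun_prop

private lemma radial_bound {u : ℂ → ℝ} (hu : ContDiff ℝ (⊤ : ℕ∞) u)
    (hts : tsupport u ⊆ Metric.ball 0 1)
    {a t : ℝ} (ha : 0 ≤ a) (hat : a ≤ t) (ht1 : t < 1) (θ : ℝ) :
    u ((t : ℂ) * Complex.exp ((θ : ℂ) * Complex.I)) ≤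
      1 / 4 + (1 - t) *
        ∫ s in a..1, ‖fderiv ℝ u ((s : ℂ) * Complex.exp ((θ : ℂ) * Complex.I))‖ ^ 2 := by
  have hud : Differentiable ℝ u := hu.differentiable (by simp)
  set e := Complex.exp ((θ : ℂ) * Complex.I) with he
  have hne : ‖e‖ = 1 := by
    simp [he, Complex.norm_exp_ofReal_mul_I]
  have hNcont : Continuous fun s : ℝ => ‖fderiv ℝ u ((s : ℂ) * e)‖ := by
    apply Continuous.norm
    exact (hu.continuous_fderiv (by simp)).comp (by fun_prop)
  have hDcont : Continuous (fun s : ℝ => (fderiv ℝ u ((s : ℂ) * e)) e) := by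
    apply Continuous.clm_apply
    · exact (hu.continuous_fderiv (by simp)).comp (by fun_prop)
    · exact continuous_const
  have hftc : ∫ s in t..(1 : ℝ), (fderiv ℝ u ((s : ℂ) * e)) e
      = u (((1 : ℝ) : ℂ) * e) - u ((t : ℂ) * e) :=
    intervalIntegral.integral_eq_sub_of_hasDerivAt
      (fun x _ => hasDerivAt_rad hud θ x) (hDcont.intervalIntegrable t 1)
  have hzero : u (((1 : ℝ) : ℂ) * e) = 0 := by
    apply image_eq_zero_of_notMem_tsupport
    intro hmem
    have := hts hmem
    rw [Metric.mem_ball, dist_zero_right] at this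
    rw [norm_mul, hne] at this
    simp at this
  have hrepr : u ((t : ℂ) * e) = ∫ s in t..(1 : ℝ), -((fderiv ℝ u ((s : ℂ) * e)) e) := by
    rw [intervalIntegral.integral_neg, hftc, hzero]
    ring
  have h1t : 0 < 1 - t := by linarith
  have hmono : (∫ s in t..(1 : ℝ), -((fderiv ℝ u ((s : ℂ) * e)) e))
      ≤ ∫ s in t..(1 : ℝ), (1 / (4 * (1 - t)) + (1 - t) * ‖fderiv ℝ u ((s : ℂ) * e)‖ ^ 2) := by
    apply intervalIntegral.integral_mono_on ht1.le
      ((hDcont.neg).intervalIntegrable _ _)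
      ((continuous_const.add (continuous_const.mul (hNcont.pow 2))).intervalIntegrable _ _)
    intro s _
    have h1 : |(fderiv ℝ u ((s : ℂ) * e)) e| ≤ ‖fderiv ℝ u ((s : ℂ) * e)‖ := by
      calc |(fderiv ℝ u ((s : ℂ) * e)) e| = ‖(fderiv ℝ u ((s : ℂ) * e)) e‖ :=
            (Real.norm_eq_abs _).symm
        _ ≤ ‖fderiv ℝ u ((s : ℂ) * e)‖ * ‖e‖ := (fderiv ℝ u _).le_opNorm e
        _ = ‖fderiv ℝ u ((s : ℂ) * e)‖ := by rw [hne, mul_one]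
    set Nv := ‖fderiv ℝ u ((s : ℂ) * e)‖ with hNv
    have hkey : (1 - t) * ((1 / (4 * (1 - t)) + (1 - t) * Nv ^ 2) - Nv)
        = ((1 - t) * Nv - 1 / 2) ^ 2 := by
      field_simp
      ring
    have h4 : 0 ≤ (1 - t) * ((1 / (4 * (1 - t)) + (1 - t) * Nv ^ 2) - Nv) := by
      rw [hkey]; positivity
    have h5 : 0 ≤ (1 / (4 * (1 - t)) + (1 - t) * Nv ^ 2) - Nv :=
      nonneg_of_mul_nonneg_right h4 h1t
    have h6 := neg_abs_le ((fderiv ℝ u ((s : ℂ) * e)) e)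
    show -(fderiv ℝ u ((s : ℂ) * e)) e ≤ 1 / (4 * (1 - t)) + (1 - t) * Nv ^ 2
    linarith
  have hcomp : (∫ s in t..(1 : ℝ), (1 / (4 * (1 - t)) + (1 - t) * ‖fderiv ℝ u ((s : ℂ) * e)‖ ^ 2))
      = 1 / 4 + (1 - t) * ∫ s in t..(1 : ℝ), ‖fderiv ℝ u ((s : ℂ) * e)‖ ^ 2 := by
    rw [intervalIntegral.integral_add (g := fun s : ℝ => (1 - t) * ‖fderiv ℝ u ((s : ℂ) * e)‖ ^ 2)
      (intervalIntegrable_const)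
      ((continuous_const.mul (hNcont.pow 2)).intervalIntegrable _ _),
      intervalIntegral.integral_const_mul, intervalIntegral.integral_const, smul_eq_mul]
    have : (1 - t) * (1 / (4 * (1 - t))) = 1 / 4 := by
      field_simp
    rw [this]
  have hlast : (∫ s in t..(1 : ℝ), ‖fderiv ℝ u ((s : ℂ) * e)‖ ^ 2)
      ≤ ∫ s in a..(1 : ℝ), ‖fderiv ℝ u ((s : ℂ) * e)‖ ^ 2 := by
    apply intervalIntegral.integral_mono_interval hat ht1.le le_rfl
    · exact Filter.Eventually.of_forall fun s => sq_nonneg _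
    · exact (hNcont.pow 2).intervalIntegrable _ _
  rw [hrepr]
  calc (∫ s in t..(1 : ℝ), -((fderiv ℝ u ((s : ℂ) * e)) e))
      ≤ 1 / 4 + (1 - t) * ∫ s in t..(1 : ℝ), ‖fderiv ℝ u ((s : ℂ) * e)‖ ^ 2 := by
        rw [← hcomp]; exact hmono
    _ ≤ 1 / 4 + (1 - t) * ∫ s in a..(1 : ℝ), ‖fderiv ℝ u ((s : ℂ) * e)‖ ^ 2 := by
        have := mul_le_mul_of_nonneg_left hlast h1t.le
        linarith

private lemma hasDerivAt_ang' {u : ℂ → ℝ} (hu : Differentiable ℝ u) (t φ : ℝ) :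
    HasDerivAt (fun φ' : ℝ => u ((t : ℂ) * Complex.exp ((φ' : ℂ) * Complex.I)))
      ((fderiv ℝ u ((t : ℂ) * Complex.exp ((φ : ℂ) * Complex.I)))
        ((t : ℂ) * (Complex.exp ((φ : ℂ) * Complex.I) * Complex.I))) φ := by
  have h0 : HasDerivAt (fun φ' : ℝ => ((φ' : ℂ) * Complex.I)) Complex.I φ := by
    simpa using (Complex.ofRealCLM.hasDerivAt (x := φ)).mul_const Complex.I
  have h2 := (h0.cexp.const_mul ((t : ℂ)))
  exact ((hu _).hasFDerivAt.comp_hasDerivAt φ h2)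

private lemma angular_bound {u : ℂ → ℝ} (hu : ContDiff ℝ (⊤ : ℕ∞) u)
    {t w θt θ : ℝ} (ht0 : 0 ≤ t) (ht1 : t ≤ 1) (hw : 0 < w)
    (hθ : θ ∈ Set.Icc (θt - w) (θt + w)) :
    u ((t : ℂ) * Complex.exp ((θt : ℂ) * Complex.I)) ≤
      u ((t : ℂ) * Complex.exp ((θ : ℂ) * Complex.I)) + 1 / 4 +
        (2 * w) * ∫ φ in (θt - w)..(θt + w),
          ‖fderiv ℝ u ((t : ℂ) * Complex.exp ((φ : ℂ) * Complex.I))‖ ^ 2 := by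
  have hud : Differentiable ℝ u := hu.differentiable (by simp)
  set D : ℝ → ℝ := fun φ => (fderiv ℝ u ((t : ℂ) * Complex.exp ((φ : ℂ) * Complex.I)))
    ((t : ℂ) * (Complex.exp ((φ : ℂ) * Complex.I) * Complex.I)) with hD
  have hNcont : Continuous fun φ : ℝ =>
      ‖fderiv ℝ u ((t : ℂ) * Complex.exp ((φ : ℂ) * Complex.I))‖ := by
    apply Continuous.norm
    exact (hu.continuous_fderiv (by simp)).comp (by fun_prop)
  have hDcont : Continuous D := by
    apply Continuous.clm_apply
    · exact (hu.continuous_fderiv (by simp)).comp (by fun_prop)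
    · fun_prop
  have hftc : ∫ φ in θ..θt, D φ
      = u ((t : ℂ) * Complex.exp ((θt : ℂ) * Complex.I))
        - u ((t : ℂ) * Complex.exp ((θ : ℂ) * Complex.I)) :=
    intervalIntegral.integral_eq_sub_of_hasDerivAt
      (fun x _ => hasDerivAt_ang' hud t x) (hDcont.intervalIntegrable _ _)
  have habs : u ((t : ℂ) * Complex.exp ((θt : ℂ) * Complex.I))
      - u ((t : ℂ) * Complex.exp ((θ : ℂ) * Complex.I))
      ≤ ∫ φ in (θt - w)..(θt + w), |D φ| := by
    rw [← hftc]
    have h2 : |∫ φ in θ..θt, D φ| ≤ ∫ φ in (θt - w)..(θt + w), |D φ| := by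
      rcases le_total θ θt with h | h
      · calc |∫ φ in θ..θt, D φ| ≤ ∫ φ in θ..θt, |D φ| := by
              simpa [Real.norm_eq_abs] using
                intervalIntegral.norm_integral_le_integral_norm (f := D) (μ := volume) h
          _ ≤ ∫ φ in (θt - w)..(θt + w), |D φ| :=
              intervalIntegral.integral_mono_interval hθ.1 h (by linarith)
                (Filter.Eventually.of_forall fun x => abs_nonneg _)
                (hDcont.abs.intervalIntegrable _ _)
      · rw [intervalIntegral.integral_symm]
        calc |-∫ φ in θt..θ, D φ| = |∫ φ in θt..θ, D φ| := abs_neg _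
          _ ≤ ∫ φ in θt..θ, |D φ| := by
              simpa [Real.norm_eq_abs] using
                intervalIntegral.norm_integral_le_integral_norm (f := D) (μ := volume) h
          _ ≤ ∫ φ in (θt - w)..(θt + w), |D φ| :=
              intervalIntegral.integral_mono_interval (by linarith) h hθ.2
                (Filter.Eventually.of_forall fun x => abs_nonneg _)
                (hDcont.abs.intervalIntegrable _ _)
    exact le_trans (le_abs_self _) h2
  have hpoint : ∀ φ : ℝ, |D φ| ≤ 1 / (8 * w)
      + (2 * w) * ‖fderiv ℝ u ((t : ℂ) * Complex.exp ((φ : ℂ) * Complex.I))‖ ^ 2 := by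
    intro φ
    set Nv := ‖fderiv ℝ u ((t : ℂ) * Complex.exp ((φ : ℂ) * Complex.I))‖ with hNv
    have hN0 : 0 ≤ Nv := norm_nonneg _
    have hnormv : ‖(t : ℂ) * (Complex.exp ((φ : ℂ) * Complex.I) * Complex.I)‖ = t := by
      rw [norm_mul, norm_mul]
      simp [Complex.norm_exp_ofReal_mul_I, abs_of_nonneg ht0]
    have h1 : |D φ| ≤ Nv := by
      calc |D φ| = ‖D φ‖ := (Real.norm_eq_abs _).symm
        _ ≤ Nv * ‖(t : ℂ) * (Complex.exp ((φ : ℂ) * Complex.I) * Complex.I)‖ :=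
            (fderiv ℝ u _).le_opNorm _
        _ = Nv * t := by rw [hnormv]
        _ ≤ Nv := by nlinarith
    have hkey : (2 * w) * ((1 / (8 * w) + (2 * w) * Nv ^ 2) - Nv)
        = (2 * w * Nv - 1 / 2) ^ 2 := by
      field_simp
      ring
    have h4 : 0 ≤ (2 * w) * ((1 / (8 * w) + (2 * w) * Nv ^ 2) - Nv) := by
      rw [hkey]; positivity
    have h5 : 0 ≤ (1 / (8 * w) + (2 * w) * Nv ^ 2) - Nv :=
      nonneg_of_mul_nonneg_right h4 (by linarith)
    linarith
  have hwin : θt - w ≤ θt + w := by linarith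
  have hmono2 : (∫ φ in (θt - w)..(θt + w), |D φ|)
      ≤ ∫ φ in (θt - w)..(θt + w), (1 / (8 * w)
        + (2 * w) * ‖fderiv ℝ u ((t : ℂ) * Complex.exp ((φ : ℂ) * Complex.I))‖ ^ 2) := by
    apply intervalIntegral.integral_mono_on hwin (hDcont.abs.intervalIntegrable _ _)
      ((continuous_const.add (continuous_const.mul (hNcont.pow 2))).intervalIntegrable _ _)
    intro φ _
    exact hpoint φ
  have hcomp : (∫ φ in (θt - w)..(θt + w), (1 / (8 * w)
        + (2 * w) * ‖fderiv ℝ u ((t : ℂ) * Complex.exp ((φ : ℂ) * Complex.I))‖ ^ 2))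
      = 1 / 4 + (2 * w) * ∫ φ in (θt - w)..(θt + w),
          ‖fderiv ℝ u ((t : ℂ) * Complex.exp ((φ : ℂ) * Complex.I))‖ ^ 2 := by
    rw [intervalIntegral.integral_add (g := fun φ : ℝ => (2 * w) *
          ‖fderiv ℝ u ((t : ℂ) * Complex.exp ((φ : ℂ) * Complex.I))‖ ^ 2) (intervalIntegrable_const)
      ((continuous_const.mul (hNcont.pow 2)).intervalIntegrable _ _),
      intervalIntegral.integral_const_mul, intervalIntegral.integral_const, smul_eq_mul]
    have : (θt + w - (θt - w)) * (1 / (8 * w)) = 1 / 4 := by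
      have : θt + w - (θt - w) = 2 * w := by ring
      rw [this]
      field_simp
      ring
    rw [this]
  linarith [habs, hmono2, hcomp.le, hcomp.ge]

private def Fcap (u : ℂ → ℝ) (s θ : ℝ) : ℝ :=
  ‖fderiv ℝ u ((s : ℂ) * Complex.exp ((θ : ℂ) * Complex.I))‖ ^ 2

private def RaCap (u : ℂ → ℝ) (a θ : ℝ) : ℝ := ∫ s in a..(1 : ℝ), Fcap u s θ

private def Jcap (u : ℂ → ℝ) (t : ℝ) : ℝ := ∫ θ in (-π)..π, Fcap u t θ

private def Wcap (u : ℂ → ℝ) (a : ℝ) : ℝ := ∫ θ in (-π)..π, RaCap u a θ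

private lemma Fcap_nonneg (u : ℂ → ℝ) (s θ : ℝ) : 0 ≤ Fcap u s θ := sq_nonneg _

private lemma Fcap_cont {u : ℂ → ℝ} (hu : ContDiff ℝ (⊤ : ℕ∞) u) :
    Continuous (Function.uncurry (Fcap u)) := by
  apply Continuous.pow
  apply Continuous.norm
  exact (hu.continuous_fderiv (by simp)).comp (by fun_prop)

private lemma Fcap_per (u : ℂ → ℝ) (s θ : ℝ) : Fcap u s (θ + 2 * π) = Fcap u s θ := by
  unfold Fcap
  congr 3
  push_cast
  rw [add_mul, Complex.exp_add, Complex.exp_two_pi_mul_I, mul_one]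

private lemma Fcap_cont_swap {u : ℂ → ℝ} (hu : ContDiff ℝ (⊤ : ℕ∞) u) :
    Continuous (Function.uncurry fun (θ s : ℝ) => Fcap u s θ) := by
  unfold Fcap
  apply Continuous.pow
  apply Continuous.norm
  exact (hu.continuous_fderiv (by simp)).comp (by fun_prop)

private lemma RaCap_cont {u : ℂ → ℝ} (hu : ContDiff ℝ (⊤ : ℕ∞) u) (a : ℝ) :
    Continuous (RaCap u a) := by
  unfold RaCap
  exact intervalIntegral.continuous_parametric_intervalIntegral_of_continuous'
    (Fcap_cont_swap hu) a 1

private lemma RaCap_per (u : ℂ → ℝ) (a : ℝ) : Function.Periodic (RaCap u a) (2 * π) := by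
  intro θ
  unfold RaCap
  exact intervalIntegral.integral_congr fun s _ => Fcap_per u s θ

private lemma RaCap_nonneg (u : ℂ → ℝ) {a : ℝ} (ha : a ≤ 1) (θ : ℝ) : 0 ≤ RaCap u a θ :=
  intervalIntegral.integral_nonneg ha fun s _ => Fcap_nonneg u s θ

private lemma Jcap_cont {u : ℂ → ℝ} (hu : ContDiff ℝ (⊤ : ℕ∞) u) :
    Continuous (Jcap u) := by
  unfold Jcap
  exact intervalIntegral.continuous_parametric_intervalIntegral_of_continuous'
    (Fcap_cont hu) (-π) π

private lemma Jcap_nonneg (u : ℂ → ℝ) (t : ℝ) : 0 ≤ Jcap u t :=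
  intervalIntegral.integral_nonneg (by linarith [Real.pi_pos]) fun θ _ => Fcap_nonneg u t θ

private lemma Fcap_cont2 {u : ℂ → ℝ} (hu : ContDiff ℝ (⊤ : ℕ∞) u) :
    Continuous (fun p : ℝ × ℝ => Fcap u p.1 p.2) := by
  unfold Fcap
  apply Continuous.pow
  apply Continuous.norm
  exact (hu.continuous_fderiv (by simp)).comp (by fun_prop)

private lemma meas_prod_restrict (s t : Set ℝ) :
    (volume : Measure (ℝ × ℝ)).restrict (s ×ˢ t)
      = (volume.restrict s).prod (volume.restrict t) := by
  rw [MeasureTheory.Measure.volume_eq_prod, Measure.prod_restrict]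

private lemma cap_rect_int {u : ℂ → ℝ} (hu : ContDiff ℝ (⊤ : ℕ∞) u) (a : ℝ) :
    IntegrableOn (fun p : ℝ × ℝ => Fcap u p.1 p.2)
      (Set.Ioo a 1 ×ˢ Set.Ioo (-π) π) volume := by
  have hc : IntegrableOn (fun p : ℝ × ℝ => Fcap u p.1 p.2)
      (Set.Icc a 1 ×ˢ Set.Icc (-π) π) volume :=
    (Fcap_cont2 hu).continuousOn.integrableOn_compact (isCompact_Icc.prod isCompact_Icc)
  exact hc.mono_set (Set.prod_mono Set.Ioo_subset_Icc_self Set.Ioo_subset_Icc_self)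

private lemma cap_fubini1 {u : ℂ → ℝ} (hu : ContDiff ℝ (⊤ : ℕ∞) u) {a r : ℝ}
    (har : a < r) (hr : r ≤ 1) :
    (∫ t in Set.Ioo a r, Jcap u t)
      = ∫ p in Set.Ioo a r ×ˢ Set.Ioo (-π) π, Fcap u p.1 p.2 := by
  have hπ := Real.pi_pos
  have hint : Integrable (Function.uncurry (Fcap u))
      ((volume.restrict (Set.Ioo a r)).prod (volume.restrict (Set.Ioo (-π) π))) := by
    rw [← meas_prod_restrict]
    exact (cap_rect_int hu a).mono_set
      (Set.prod_mono (Set.Ioo_subset_Ioo_right hr) subset_rfl)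
  rw [meas_prod_restrict, ← MeasureTheory.integral_integral hint]
  refine integral_congr_ae (Filter.Eventually.of_forall fun t => ?_)
  unfold Jcap
  rw [intervalIntegral.integral_of_le (by linarith : -π ≤ π),
    MeasureTheory.integral_Ioc_eq_integral_Ioo]

private lemma cap_fubini2 {u : ℂ → ℝ} (hu : ContDiff ℝ (⊤ : ℕ∞) u) {a : ℝ}
    (ha1 : a ≤ 1) :
    Wcap u a = ∫ p in Set.Ioo a 1 ×ˢ Set.Ioo (-π) π, Fcap u p.1 p.2 := by
  have hπ := Real.pi_pos
  have hint : Integrable (fun p : ℝ × ℝ => Fcap u p.1 p.2)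
      ((volume.restrict (Set.Ioo a 1)).prod (volume.restrict (Set.Ioo (-π) π))) := by
    rw [← meas_prod_restrict]
    exact cap_rect_int hu a
  have hint2 : Integrable (Function.uncurry (fun θ s => Fcap u s θ))
      ((volume.restrict (Set.Ioo (-π) π)).prod (volume.restrict (Set.Ioo a 1))) :=
    hint.swap
  have hswap := MeasureTheory.integral_prod_swap
    (μ := volume.restrict (Set.Ioo a 1)) (ν := volume.restrict (Set.Ioo (-π) π))
    (fun p : ℝ × ℝ => Fcap u p.1 p.2)
  have h1 : Wcap u a = ∫ θ in Set.Ioo (-π) π, RaCap u a θ := by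
    unfold Wcap
    rw [intervalIntegral.integral_of_le (by linarith : -π ≤ π),
      MeasureTheory.integral_Ioc_eq_integral_Ioo]
  have h2 : (∫ θ in Set.Ioo (-π) π, RaCap u a θ)
      = ∫ θ, (∫ s, Fcap u s θ ∂(volume.restrict (Set.Ioo a 1)))
          ∂(volume.restrict (Set.Ioo (-π) π)) := by
    refine integral_congr_ae (Filter.Eventually.of_forall fun θ => ?_)
    unfold RaCap
    rw [intervalIntegral.integral_of_le ha1,
      MeasureTheory.integral_Ioc_eq_integral_Ioo]
  rw [h1, h2, MeasureTheory.integral_integral hint2, meas_prod_restrict]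
  exact hswap

private lemma cap_polar {u : ℂ → ℝ} (hu : ContDiff ℝ (⊤ : ℕ∞) u) {a : ℝ}
    (ha : 1 / 2 ≤ a) :
    (∫ p in Set.Ioo a 1 ×ˢ Set.Ioo (-π) π, Fcap u p.1 p.2)
      ≤ 2 * ∫ z in Metric.ball (0 : ℂ) 1, ‖fderiv ℝ u z‖ ^ 2 := by
  have hπ := Real.pi_pos
  set A : Set ℂ := Metric.ball (0 : ℂ) 1 \ Metric.closedBall 0 a with hAdef
  have hAmeas : MeasurableSet A := measurableSet_ball.diff measurableSet_closedBall
  have hNball : IntegrableOn (fun z : ℂ => ‖fderiv ℝ u z‖ ^ 2)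
      (Metric.ball (0 : ℂ) 1) volume := by
    have hNc : Continuous fun z : ℂ => ‖fderiv ℝ u z‖ ^ 2 :=
      ((hu.continuous_fderiv (by simp)).norm).pow 2
    exact (hNc.continuousOn.integrableOn_compact
      (isCompact_closedBall (0 : ℂ) 1)).mono_set Metric.ball_subset_closedBall
  have hIA : ∫ z in A, ‖fderiv ℝ u z‖ ^ 2 ≤ ∫ z in Metric.ball (0 : ℂ) 1, ‖fderiv ℝ u z‖ ^ 2 :=
    setIntegral_mono_set hNball
      (Filter.Eventually.of_forall fun z => sq_nonneg _)
      (HasSubset.Subset.eventuallyLE Set.diff_subset)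
  have hpolar := Complex.integral_comp_polarCoord_symm
    (Set.indicator A (fun z => ‖fderiv ℝ u z‖ ^ 2))
  have hrhs : (∫ z, Set.indicator A (fun z => ‖fderiv ℝ u z‖ ^ 2) z)
      = ∫ z in A, ‖fderiv ℝ u z‖ ^ 2 := integral_indicator hAmeas
  have htarget : polarCoord.target = Set.Ioi (0 : ℝ) ×ˢ Set.Ioo (-π) π := rfl
  have hrect_sub : (Set.Ioo a 1 ×ˢ Set.Ioo (-π) π) ⊆ polarCoord.target := by
    rw [htarget]
    apply Set.prod_mono _ subset_rfl
    intro x hx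
    have : a < x := hx.1
    exact Set.mem_Ioi.2 (by linarith)
  have hrect_meas : MeasurableSet (Set.Ioo a 1 ×ˢ Set.Ioo (-π) π) :=
    measurableSet_Ioo.prod measurableSet_Ioo
  have hcongr : Set.EqOn
      (fun p : ℝ × ℝ => p.1 •
        (Set.indicator A (fun z => ‖fderiv ℝ u z‖ ^ 2) (Complex.polarCoord.symm p)))
      (Set.indicator (Set.Ioo a 1 ×ˢ Set.Ioo (-π) π)
        (fun q : ℝ × ℝ => q.1 * Fcap u q.1 q.2))
      polarCoord.target := by
    intro p hp
    rw [htarget] at hp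
    have hp1 : (0 : ℝ) < p.1 := hp.1
    have hsymm : Complex.polarCoord.symm p
        = ((p.1 : ℝ) : ℂ) * Complex.exp (((p.2 : ℝ) : ℂ) * Complex.I) := by
      rw [Complex.polarCoord_symm_apply, Complex.exp_mul_I]
      push_cast
      ring
    have habs : ‖Complex.polarCoord.symm p‖ = p.1 := by
      rw [Complex.norm_polarCoord_symm, abs_of_pos hp1]
    by_cases h1 : p.1 ∈ Set.Ioo a 1
    · have hzA : Complex.polarCoord.symm p ∈ A := by
        constructor
        · rw [Metric.mem_ball, dist_zero_right, habs]
          exact h1.2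
        · rw [Metric.mem_closedBall, dist_zero_right, habs]
          push_neg
          exact h1.1
      show p.1 • (Set.indicator A (fun z => ‖fderiv ℝ u z‖ ^ 2) (Complex.polarCoord.symm p))
        = Set.indicator (Set.Ioo a 1 ×ˢ Set.Ioo (-π) π)
            (fun q : ℝ × ℝ => q.1 * Fcap u q.1 q.2) p
      rw [Set.indicator_of_mem hzA, Set.indicator_of_mem (Set.mem_prod.2 ⟨h1, hp.2⟩)]
      rw [hsymm]
      unfold Fcap
      rw [smul_eq_mul]
    · have hzA : Complex.polarCoord.symm p ∉ A := by
        intro hc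
        apply h1
        obtain ⟨hc1, hc2⟩ := hc
        rw [Metric.mem_ball, dist_zero_right, habs] at hc1
        rw [Metric.mem_closedBall, dist_zero_right, habs] at hc2
        push_neg at hc2
        exact ⟨hc2, hc1⟩
      have hpr : p ∉ Set.Ioo a 1 ×ˢ Set.Ioo (-π) π := fun hc => h1 hc.1
      show p.1 • (Set.indicator A (fun z => ‖fderiv ℝ u z‖ ^ 2) (Complex.polarCoord.symm p))
        = Set.indicator (Set.Ioo a 1 ×ˢ Set.Ioo (-π) π)
            (fun q : ℝ × ℝ => q.1 * Fcap u q.1 q.2) p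
      rw [Set.indicator_of_notMem hzA, Set.indicator_of_notMem hpr, smul_zero]
  have hlhs_eq : (∫ p in polarCoord.target,
      p.1 • (Set.indicator A (fun z => ‖fderiv ℝ u z‖ ^ 2) (Complex.polarCoord.symm p)))
      = ∫ p in Set.Ioo a 1 ×ˢ Set.Ioo (-π) π, p.1 * Fcap u p.1 p.2 := by
    rw [setIntegral_congr_fun polarCoord.open_target.measurableSet hcongr,
      setIntegral_indicator hrect_meas,
      Set.inter_eq_self_of_subset_right hrect_sub]
  have hmul_int : IntegrableOn (fun p : ℝ × ℝ => p.1 * Fcap u p.1 p.2)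
      (Set.Ioo a 1 ×ˢ Set.Ioo (-π) π) volume := by
    have hc : Continuous fun p : ℝ × ℝ => p.1 * Fcap u p.1 p.2 :=
      continuous_fst.mul (Fcap_cont2 hu)
    exact (hc.continuousOn.integrableOn_compact
      (isCompact_Icc.prod isCompact_Icc)).mono_set
      (Set.prod_mono Set.Ioo_subset_Icc_self Set.Ioo_subset_Icc_self)
  have hBle : (∫ p in Set.Ioo a 1 ×ˢ Set.Ioo (-π) π, Fcap u p.1 p.2)
      ≤ 2 * ∫ p in Set.Ioo a 1 ×ˢ Set.Ioo (-π) π, p.1 * Fcap u p.1 p.2 := by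
    rw [← MeasureTheory.integral_const_mul]
    apply setIntegral_mono_on (cap_rect_int hu a) (hmul_int.const_mul 2) hrect_meas
    intro p hp
    have hp1 : 1 / 2 ≤ p.1 := by linarith [hp.1.1]
    nlinarith [Fcap_nonneg u p.1 p.2]
  have hend : (∫ p in Set.Ioo a 1 ×ˢ Set.Ioo (-π) π, p.1 * Fcap u p.1 p.2)
      ≤ ∫ z in Metric.ball (0 : ℂ) 1, ‖fderiv ℝ u z‖ ^ 2 := by
    calc (∫ p in Set.Ioo a 1 ×ˢ Set.Ioo (-π) π, p.1 * Fcap u p.1 p.2)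
        = ∫ z in A, ‖fderiv ℝ u z‖ ^ 2 := by rw [← hlhs_eq, hpolar, hrhs]
      _ ≤ _ := hIA
  linarith

private lemma radial_bound2 {u : ℂ → ℝ} (hu : ContDiff ℝ (⊤ : ℕ∞) u)
    (hts : tsupport u ⊆ Metric.ball 0 1)
    {a t : ℝ} (ha : 0 ≤ a) (hat : a ≤ t) (ht1 : t < 1) (θ : ℝ) :
    u ((t : ℂ) * Complex.exp ((θ : ℂ) * Complex.I)) ≤
      1 / 4 + (1 - t) * RaCap u a θ := by
  unfold RaCap Fcap
  exact radial_bound hu hts ha hat ht1 θ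

private lemma angular_bound2 {u : ℂ → ℝ} (hu : ContDiff ℝ (⊤ : ℕ∞) u)
    {t w θt θ : ℝ} (ht0 : 0 ≤ t) (ht1 : t ≤ 1) (hw : 0 < w)
    (hθ : θ ∈ Set.Icc (θt - w) (θt + w)) :
    u ((t : ℂ) * Complex.exp ((θt : ℂ) * Complex.I)) ≤
      u ((t : ℂ) * Complex.exp ((θ : ℂ) * Complex.I)) + 1 / 4 +
        (2 * w) * ∫ φ in (θt - w)..(θt + w), Fcap u t φ := by
  unfold Fcap
  exact angular_bound hu ht0 ht1 hw hθ

private lemma Fcap_t_cont {u : ℂ → ℝ} (hu : ContDiff ℝ (⊤ : ℕ∞) u) (t : ℝ) :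
    Continuous fun φ => Fcap u t φ := by
  unfold Fcap
  apply Continuous.pow
  apply Continuous.norm
  exact (hu.continuous_fderiv (by simp)).comp (by fun_prop)

private lemma Fcap_t_per (u : ℂ → ℝ) (t : ℝ) :
    Function.Periodic (fun φ => Fcap u t φ) (2 * π) := fun φ => Fcap_per u t φ

private lemma per_t_bound {u : ℂ → ℝ} (hu : ContDiff ℝ (⊤ : ℕ∞) u)
    (hts : tsupport u ⊆ Metric.ball 0 1) {b κ a r t : ℝ}
    (hb : 1 ≤ b) (hκ : κ = 4 * b) (ha : 1 / 2 ≤ a) (hr : r < 1)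
    (hκa : κ * (1 - a) ≤ π) (hW : Wcap u a ≤ 2 * b)
    (ht : t ∈ Set.Ioo a r)
    (hpt : ∃ θ : ℝ, 1 ≤ u ((t : ℂ) * Complex.exp ((θ : ℂ) * Complex.I))) :
    (1 - t)⁻¹ ≤ 8 * κ * Jcap u t := by
  have hπ := Real.pi_pos
  have hκpos : 0 < κ := by linarith
  obtain ⟨θt, hθt⟩ := hpt
  have h1t : 0 < 1 - t := by linarith [ht.2]
  set w : ℝ := κ * (1 - t) with hwdef
  have hw : 0 < w := mul_pos hκpos h1t
  have hwπ : w ≤ π := by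
    have h1 : 1 - t ≤ 1 - a := by linarith [ht.1]
    nlinarith
  have ht0 : (0 : ℝ) ≤ t := by linarith [ht.1]
  have ht1 : t ≤ 1 := by linarith [ht.2]
  have ha1 : a ≤ 1 := by linarith [ht.1, ht.2]
  have base : ∀ θ ∈ Set.Icc (θt - w) (θt + w),
      (1 : ℝ) / 2 ≤ (1 - t) * RaCap u a θ
        + (2 * w) * ∫ φ in (θt - w)..(θt + w), Fcap u t φ := by
    intro θ hθ
    have hang := angular_bound2 hu ht0 ht1 hw hθ
    have hrad := radial_bound2 hu hts (by linarith : (0 : ℝ) ≤ a) ht.1.le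
      (by linarith [ht.2]) θ
    linarith
  have hwin_le : θt - w ≤ θt + w := by linarith
  have hRaCont := RaCap_cont hu a
  have hFtCont := Fcap_t_cont hu t
  have hRHScont : Continuous fun θ : ℝ => (1 - t) * RaCap u a θ
      + (2 * w) * ∫ φ in (θt - w)..(θt + w), Fcap u t φ :=
    (continuous_const.mul hRaCont).add continuous_const
  have hint := intervalIntegral.integral_mono_on hwin_le
    (intervalIntegrable_const (μ := volume)) (hRHScont.intervalIntegrable _ _) base
  have hLHS : (∫ _ in (θt - w)..(θt + w), (1 : ℝ) / 2) = w := by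
    rw [intervalIntegral.integral_const, smul_eq_mul]
    ring
  have hRHS : (∫ θ in (θt - w)..(θt + w), ((1 - t) * RaCap u a θ
      + (2 * w) * ∫ φ in (θt - w)..(θt + w), Fcap u t φ))
      = (1 - t) * (∫ θ in (θt - w)..(θt + w), RaCap u a θ)
        + (2 * w) * (∫ φ in (θt - w)..(θt + w), Fcap u t φ) * (2 * w) := by
    rw [intervalIntegral.integral_add ((hRaCont.intervalIntegrable _ _).const_mul _)
      intervalIntegrable_const, intervalIntegral.integral_const_mul,
      intervalIntegral.integral_const, smul_eq_mul]
    ring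
  have hRaW : (∫ θ in (θt - w)..(θt + w), RaCap u a θ) ≤ Wcap u a := by
    have hmono : (∫ θ in (θt - w)..(θt + w), RaCap u a θ)
        ≤ ∫ θ in (θt - π)..(θt + π), RaCap u a θ :=
      intervalIntegral.integral_mono_interval (by linarith) hwin_le (by linarith)
        (Filter.Eventually.of_forall fun θ => RaCap_nonneg u ha1 θ)
        (hRaCont.intervalIntegrable _ _)
    have hper := (RaCap_per u a).intervalIntegral_add_eq (θt - π) (-π)
    rw [show θt - π + 2 * π = θt + π by ring, show -π + 2 * π = π by ring] at hper
    unfold Wcap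
    linarith [hper.le, hper.ge]
  have hJwinle : (∫ φ in (θt - w)..(θt + w), Fcap u t φ) ≤ Jcap u t := by
    have hmono : (∫ φ in (θt - w)..(θt + w), Fcap u t φ)
        ≤ ∫ φ in (θt - π)..(θt + π), Fcap u t φ :=
      intervalIntegral.integral_mono_interval (by linarith) hwin_le (by linarith)
        (Filter.Eventually.of_forall fun φ => Fcap_nonneg u t φ)
        (hFtCont.intervalIntegrable _ _)
    have hper := (Fcap_t_per u t).intervalIntegral_add_eq (θt - π) (-π)
    rw [show θt - π + 2 * π = θt + π by ring, show -π + 2 * π = π by ring] at hper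
    unfold Jcap
    linarith [hper.le, hper.ge]
  have hJ0 := Jcap_nonneg u t
  have hcomb : w ≤ (1 - t) * Wcap u a + (2 * w) * (Jcap u t) * (2 * w) := by
    have h1 : (1 - t) * (∫ θ in (θt - w)..(θt + w), RaCap u a θ)
        ≤ (1 - t) * Wcap u a := mul_le_mul_of_nonneg_left hRaW h1t.le
    have h2 : (2 * w) * (∫ φ in (θt - w)..(θt + w), Fcap u t φ) * (2 * w)
        ≤ (2 * w) * (Jcap u t) * (2 * w) :=
      mul_le_mul_of_nonneg_right
        (mul_le_mul_of_nonneg_left hJwinle (by linarith : (0:ℝ) ≤ 2 * w))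
        (by linarith : (0:ℝ) ≤ 2 * w)
    linarith [hint, hLHS.le, hLHS.ge, hRHS.le, hRHS.ge]
  have hWb : (1 - t) * Wcap u a ≤ w / 2 := by
    calc (1 - t) * Wcap u a ≤ (1 - t) * (2 * b) := by nlinarith
      _ = w / 2 := by rw [hwdef, hκ]; ring
  have h4 : 0 ≤ w * (8 * w * Jcap u t - 1) := by nlinarith
  have h5 : 0 ≤ 8 * w * Jcap u t - 1 := nonneg_of_mul_nonneg_right h4 hw
  rw [inv_eq_one_div, div_le_iff₀ h1t]
  have h6 : 8 * w * Jcap u t = 8 * κ * Jcap u t * (1 - t) := by rw [hwdef]; ring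
  linarith

private lemma cap_key {b κ a r : ℝ} (u : ℂ → ℝ) (hu : ContDiff ℝ (⊤ : ℕ∞) u)
    (hts : tsupport u ⊆ Metric.ball 0 1)
    (hb : 1 ≤ b) (hκ : κ = 4 * b)
    (ha : 1 / 2 ≤ a) (har : a < r) (hr : r < 1) (hκa : κ * (1 - a) ≤ π)
    (hL : 16 * κ * b ≤ Real.log ((1 - a) / (1 - r)))
    (hpts : ∀ t ∈ Set.Ioo a r, ∃ θ : ℝ,
      1 ≤ u ((t : ℂ) * Complex.exp ((θ : ℂ) * Complex.I))) :
    b ≤ ∫ z in Metric.ball (0 : ℂ) 1, ‖fderiv ℝ u z‖ ^ 2 := by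
  have hπ := Real.pi_pos
  have hκpos : 0 < κ := by linarith
  by_contra hcon
  push_neg at hcon
  have hB2E := cap_polar hu ha
  have hW2E : Wcap u a ≤ 2 * b := by
    rw [cap_fubini2 hu (by linarith : a ≤ 1)]
    linarith
  have hpert : ∀ t ∈ Set.Ioo a r, (1 - t)⁻¹ ≤ 8 * κ * Jcap u t :=
    fun t ht => per_t_bound hu hts hb hκ ha hr hκa hW2E ht (hpts t ht)
  have hIoo_inv_int : IntegrableOn (fun t : ℝ => (1 - t)⁻¹) (Set.Ioo a r) volume := by
    have hc : ContinuousOn (fun t : ℝ => (1 - t)⁻¹) (Set.Icc a r) := by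
      apply ContinuousOn.inv₀ (Continuous.continuousOn (by fun_prop))
      intro x hx hz
      have hx1 : x = 1 := by linarith
      linarith [hx.2]
    exact (hc.integrableOn_compact isCompact_Icc).mono_set Set.Ioo_subset_Icc_self
  have hJ_int : IntegrableOn (fun t => 8 * κ * Jcap u t) (Set.Ioo a r) volume :=
    ((continuous_const.mul (Jcap_cont hu)).continuousOn.integrableOn_compact
      isCompact_Icc).mono_set Set.Ioo_subset_Icc_self
  have hstep : (∫ t in Set.Ioo a r, (1 - t)⁻¹) ≤ ∫ t in Set.Ioo a r, 8 * κ * Jcap u t :=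
    setIntegral_mono_on hIoo_inv_int hJ_int measurableSet_Ioo hpert
  have hlog : (∫ t in Set.Ioo a r, (1 - t)⁻¹) = Real.log ((1 - a) / (1 - r)) := by
    rw [← MeasureTheory.integral_Ioc_eq_integral_Ioo,
      ← intervalIntegral.integral_of_le har.le]
    have hder : ∀ x ∈ Set.uIcc a r,
        HasDerivAt (fun y : ℝ => -Real.log (1 - y)) (1 - x)⁻¹ x := by
      intro x hx
      rw [Set.uIcc_of_le har.le] at hx
      have hne : 1 - x ≠ 0 := by
        intro h
        have : x = 1 := by linarith
        linarith [hx.2]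
      have h1 : HasDerivAt (fun y : ℝ => 1 - y) (-1) x := by
        simpa using (hasDerivAt_id x).const_sub 1
      have h3 : HasDerivAt (fun y : ℝ => -Real.log (1 - y)) (-((1 - x)⁻¹ * (-1))) x :=
        ((Real.hasDerivAt_log hne).comp x h1).neg
      convert h3 using 1
      ring
    have hcont : IntervalIntegrable (fun x : ℝ => (1 - x)⁻¹) volume a r := by
      apply ContinuousOn.intervalIntegrable
      apply ContinuousOn.inv₀ (Continuous.continuousOn (by fun_prop))
      intro x hx hz
      rw [Set.uIcc_of_le har.le] at hx
      have : x = 1 := by linarith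
      linarith [hx.2]
    rw [intervalIntegral.integral_eq_sub_of_hasDerivAt hder hcont]
    rw [Real.log_div (by linarith) (by linarith)]
    ring
  have hmono_rect : (∫ t in Set.Ioo a r, Jcap u t)
      ≤ ∫ p in Set.Ioo a 1 ×ˢ Set.Ioo (-π) π, Fcap u p.1 p.2 := by
    rw [cap_fubini1 hu har hr.le]
    exact setIntegral_mono_set (cap_rect_int hu a)
      (Filter.Eventually.of_forall fun p => Fcap_nonneg u p.1 p.2)
      (HasSubset.Subset.eventuallyLE
        (Set.prod_mono (Set.Ioo_subset_Ioo_right hr.le) subset_rfl))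
  have hfinal : Real.log ((1 - a) / (1 - r))
      ≤ 16 * κ * ∫ z in Metric.ball (0 : ℂ) 1, ‖fderiv ℝ u z‖ ^ 2 := by
    calc Real.log ((1 - a) / (1 - r)) = ∫ t in Set.Ioo a r, (1 - t)⁻¹ := hlog.symm
      _ ≤ ∫ t in Set.Ioo a r, 8 * κ * Jcap u t := hstep
      _ = 8 * κ * ∫ t in Set.Ioo a r, Jcap u t := by
          rw [MeasureTheory.integral_const_mul]
      _ ≤ 8 * κ * ∫ p in Set.Ioo a 1 ×ˢ Set.Ioo (-π) π, Fcap u p.1 p.2 :=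
          mul_le_mul_of_nonneg_left hmono_rect (by linarith)
      _ ≤ 8 * κ * (2 * ∫ z in Metric.ball (0 : ℂ) 1, ‖fderiv ℝ u z‖ ^ 2) :=
          mul_le_mul_of_nonneg_left hB2E (by linarith)
      _ = 16 * κ * ∫ z in Metric.ball (0 : ℂ) 1, ‖fderiv ℝ u z‖ ^ 2 := by ring
  nlinarith [hL, hfinal, mul_pos hκpos (sub_pos.mpr hcon)]

private lemma cap_main (K : Set ℂ) (r₀ : ℝ) (hr₀1 : r₀ < 1)
    (hK : ∀ r ∈ Set.Ioo r₀ 1, (K ∩ Metric.sphere (0 : ℂ) r).Nonempty) :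
    Tendsto (fun r : ℝ => conformalCapacity (K ∩ Metric.closedBall 0 r) unitDisk)
      (nhdsWithin 1 (Set.Iio 1)) atTop := by
  have hπ := Real.pi_pos
  rw [Filter.tendsto_atTop]
  intro b0
  set b : ℝ := max b0 1 with hbdef
  have hb1 : (1 : ℝ) ≤ b := le_max_right _ _
  have hb0 : (0 : ℝ) < b := by linarith
  set κ : ℝ := 4 * b with hκdef
  have hκpos : 0 < κ := by linarith
  set a : ℝ := max (max r₀ (1 / 2)) (1 - π / κ) with hadef
  have ha2 : 1 / 2 ≤ a := le_trans (le_max_right _ _) (le_max_left _ _)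
  have har₀ : r₀ ≤ a := le_trans (le_max_left _ _) (le_max_left _ _)
  have hπκ : 0 < π / κ := div_pos hπ hκpos
  have ha1 : a < 1 := by
    apply max_lt (max_lt hr₀1 (by norm_num))
    linarith
  have hκa : κ * (1 - a) ≤ π := by
    have h1 : 1 - π / κ ≤ a := le_max_right _ _
    have h2 : 1 - a ≤ π / κ := by linarith
    calc κ * (1 - a) ≤ κ * (π / κ) := mul_le_mul_of_nonneg_left h2 hκpos.le
      _ = π := by field_simp
  set ρ : ℝ := 1 - (1 - a) * Real.exp (-(16 * κ * b)) with hρdef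
  have hexp1 : Real.exp (-(16 * κ * b)) < 1 := by
    rw [Real.exp_lt_one_iff]
    nlinarith
  have hexppos : 0 < Real.exp (-(16 * κ * b)) := Real.exp_pos _
  have h1a : 0 < 1 - a := by linarith
  have hρa : a < ρ := by nlinarith
  have hρ1 : ρ < 1 := by nlinarith
  filter_upwards [Ioo_mem_nhdsLT_of_mem
    (show (1 : ℝ) ∈ Set.Ioc ρ 1 from ⟨hρ1, le_refl _⟩)] with r hrmem
  obtain ⟨hρr, hr1⟩ := hrmem
  have har : a < r := lt_trans hρa hρr
  have hr0 : (0 : ℝ) < r := by linarith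
  have hL : 16 * κ * b ≤ Real.log ((1 - a) / (1 - r)) := by
    have h1r : 0 < 1 - r := by linarith
    have hlt : 1 - r < (1 - a) * Real.exp (-(16 * κ * b)) := by
      rw [hρdef] at hρr
      linarith
    have hquot : Real.exp (16 * κ * b) ≤ (1 - a) / (1 - r) := by
      rw [le_div_iff₀ h1r]
      calc Real.exp (16 * κ * b) * (1 - r)
          ≤ Real.exp (16 * κ * b) * ((1 - a) * Real.exp (-(16 * κ * b))) := by
            have := Real.exp_pos (16 * κ * b)
            nlinarith
        _ = (1 - a) * (Real.exp (16 * κ * b) * Real.exp (-(16 * κ * b))) := by ring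
        _ = 1 - a := by rw [← Real.exp_add]; simp
    calc 16 * κ * b = Real.log (Real.exp (16 * κ * b)) := (Real.log_exp _).symm
      _ ≤ Real.log ((1 - a) / (1 - r)) :=
          (Real.log_le_log_iff (Real.exp_pos _) (div_pos h1a h1r)).mpr hquot
  show b0 ≤ conformalCapacity (K ∩ Metric.closedBall 0 r) unitDisk
  have hb0b : b0 ≤ b := le_max_left _ _
  refine le_trans hb0b ?_
  unfold conformalCapacity
  apply le_csInf
  · set c : ContDiffBump (0 : ℂ) :=
      ⟨(1 + r) / 2, (3 + r) / 4, by linarith, by linarith⟩ with hcdef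
    refine ⟨_, ⟨fun z => c z, c.contDiff, c.hasCompactSupport, ?_, ?_, rfl⟩⟩
    · have hts := c.tsupport_eq
      show tsupport (fun z => c z) ⊆ unitDisk
      rw [show (fun z => c z) = ⇑c from rfl, hts]
      intro z hz
      rw [Metric.mem_closedBall] at hz
      show z ∈ Metric.ball (0 : ℂ) 1
      rw [Metric.mem_ball]
      have : c.rOut = (3 + r) / 4 := rfl
      rw [this] at hz
      calc dist z 0 ≤ (3 + r) / 4 := hz
        _ < 1 := by linarith
    · intro z hz
      have hz2 : z ∈ Metric.closedBall (0 : ℂ) c.rIn := by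
        obtain ⟨_, hz2⟩ := hz
        rw [Metric.mem_closedBall] at hz2 ⊢
        have : c.rIn = (1 + r) / 2 := rfl
        rw [this]
        calc dist z 0 ≤ r := hz2
          _ ≤ (1 + r) / 2 := by linarith
      exact le_of_eq (c.one_of_mem_closedBall hz2).symm
  · rintro E ⟨v, hv1, hv2, hv3, hv4, rfl⟩
    have hpts : ∀ t ∈ Set.Ioo a r, ∃ θ : ℝ,
        1 ≤ v ((t : ℂ) * Complex.exp ((θ : ℂ) * Complex.I)) := by
      intro t ht
      obtain ⟨x, hxK, hxS⟩ := hK t ⟨lt_of_le_of_lt har₀ ht.1, lt_trans ht.2 hr1⟩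
      have hxd : dist x 0 = t := hxS
      have hxabs : ‖x‖ = t := by
        rw [Complex.dist_eq] at hxd
        simpa using hxd
      refine ⟨Complex.arg x, ?_⟩
      have hx' : ((t : ℝ) : ℂ) * Complex.exp ((Complex.arg x : ℂ) * Complex.I) = x := by
        rw [← hxabs]
        exact_mod_cast Complex.norm_mul_exp_arg_mul_I x
      rw [hx']
      apply hv4
      refine ⟨hxK, ?_⟩
      rw [Metric.mem_closedBall, hxd]
      exact ht.2.le
    exact cap_key v hv1 hv3 hb1 hκdef ha2 har hr1 hκa hL hpts

end CapAux

/-- If `K` is closed in `𝔻` and meets the circle `𝕊¹(r)` for every `r ∈ (r₀, 1)`,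
then the conformal capacity `cap(K ∩ closure 𝔻(r), 𝔻)` tends to infinity as
`r → 1⁻`. -/
theorem capacity_tendsto_atTop
    (K : Set ℂ) (r₀ : ℝ)
    (hKsub : K ⊆ unitDisk) (hKclosed : ∃ C : Set ℂ, IsClosed C ∧ K = C ∩ unitDisk)
    (hr₀ : r₀ ∈ Set.Ico (0 : ℝ) 1)
    (hK : ∀ r ∈ Set.Ioo r₀ 1, (K ∩ Metric.sphere (0 : ℂ) r).Nonempty) :
    Tendsto (fun r : ℝ => conformalCapacity (K ∩ Metric.closedBall 0 r) unitDisk)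
      (nhdsWithin 1 (Set.Iio 1)) atTop :=
  cap_main K r₀ hr₀.2 hK

end
end

section
/- Suppose h ∈ C(𝔻, ℂ) ∩ W^{1,2}(𝔻, ℂ) and h − f ∈ W^{1,2}_0(𝔻, ℂ) for some f ∈ C(closure(𝔻), ℂ). Then for every connected set C ⊂ 𝔻 whose closure meets the unit circle 𝕊¹, the sets f(closure(C) ∩ 𝕊¹) and closure(h(C)) have nonempty intersection. -/
open MeasureTheory Metric Set Filter Topology

noncomputable section

def polarMap (p : ℂ) (ζ : ℂ) : ℂ := p + ζ.re * Complex.exp (ζ.im * Complex.I)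

def Lmap (s θ : ℝ) : ℂ →L[ℝ] ℂ :=
  (Complex.exp (θ * Complex.I)) •
    ((Complex.ofRealCLM.comp Complex.reCLM) +
      (s * Complex.I) • (Complex.ofRealCLM.comp Complex.imCLM))

lemma polarMap_hasFDerivAt (p : ℂ) (ζ : ℂ) :
    HasFDerivAt (polarMap p) (Lmap ζ.re ζ.im) ζ := by
  have h1 : HasFDerivAt (fun z : ℂ => (z.re : ℂ))
      (Complex.ofRealCLM.comp Complex.reCLM) ζ :=
    (Complex.ofRealCLM.comp Complex.reCLM).hasFDerivAt
  have h2 : HasFDerivAt (fun z : ℂ => ((z.im : ℂ) * Complex.I))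
      ((Complex.I) • (Complex.ofRealCLM.comp Complex.imCLM)) ζ := by
    have := ((Complex.ofRealCLM.comp Complex.imCLM).hasFDerivAt (x := ζ)).mul_const Complex.I
    exact this
  have hexp : HasDerivAt Complex.exp (Complex.exp ((ζ.im : ℂ) * Complex.I))
      ((ζ.im : ℂ) * Complex.I) := Complex.hasDerivAt_exp _
  have h3 : HasFDerivAt (fun z : ℂ => Complex.exp ((z.im : ℂ) * Complex.I))
      ((Complex.exp ((ζ.im : ℂ) * Complex.I)) •
        ((Complex.I) • (Complex.ofRealCLM.comp Complex.imCLM))) ζ := by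
    have := (hexp.comp_hasFDerivAt ζ h2)
    exact this
  have h4 := h1.mul' h3
  have h5 := h4.const_add p
  have h6 : HasFDerivAt (polarMap p)
      ((ζ.re : ℂ) • (Complex.exp ((ζ.im : ℂ) * Complex.I) •
          ((Complex.I) • (Complex.ofRealCLM.comp Complex.imCLM))) +
        (Complex.ofRealCLM.comp Complex.reCLM).smulRight (Complex.exp ((ζ.im : ℂ) * Complex.I))) ζ := h5
  convert h6 using 1
  ext v
  simp [Lmap, smul_eq_mul]
  ring

lemma clm_apply_sq_le (A : ℂ →L[ℝ] ℂ) (v : ℂ) :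
    ‖A v‖^2 ≤ 2 * ‖v‖^2 * (‖A 1‖^2 + ‖A Complex.I‖^2) := by
  have hv : v = v.re • (1:ℂ) + v.im • Complex.I := by
    simpa [Complex.real_smul] using (Complex.re_add_im v).symm
  have h1 : ‖A v‖ ≤ |v.re| * ‖A 1‖ + |v.im| * ‖A Complex.I‖ := by
    conv_lhs => rw [hv]
    rw [map_add, A.map_smul, A.map_smul]
    refine (norm_add_le _ _).trans ?_
    simp [norm_smul]
  have h2 : |v.re| ≤ ‖v‖ := Complex.abs_re_le_norm v
  have h3 : |v.im| ≤ ‖v‖ := Complex.abs_im_le_norm v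
  have h4 : (0:ℝ) ≤ ‖A 1‖ := norm_nonneg _
  have h5 : (0:ℝ) ≤ ‖A Complex.I‖ := norm_nonneg _
  have h6 : (0:ℝ) ≤ ‖A v‖ := norm_nonneg _
  have h7 : (0:ℝ) ≤ |v.re| := abs_nonneg _
  have h8 : (0:ℝ) ≤ |v.im| := abs_nonneg _
  nlinarith [sq_nonneg (|v.re| * ‖A Complex.I‖ - |v.im| * ‖A 1‖),
    mul_le_mul h2 h2 h7 (norm_nonneg v), mul_le_mul h3 h3 h8 (norm_nonneg v),
    mul_le_mul h1 h1 h6 (le_trans h6 h1)]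

/-- The derivative of the polar map. -/

lemma Lmap_apply (s θ : ℝ) (v : ℂ) :
    Lmap s θ v = Complex.exp (θ * Complex.I) * (v.re + (s * Complex.I) * v.im) := by
  simp [Lmap, smul_eq_mul]; ring

lemma Lmap_det (s θ : ℝ) : (Lmap s θ).det = s := by
  have hm : LinearMap.toMatrix Complex.basisOneI Complex.basisOneI (Lmap s θ).toLinearMap
      = !![Real.cos θ, -(s * Real.sin θ); Real.sin θ, s * Real.cos θ] := by
    ext i j
    fin_cases i <;> fin_cases j <;>
      simp [LinearMap.toMatrix_apply, Complex.coe_basisOneI, Lmap_apply,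
        Complex.coe_basisOneI_repr, Complex.exp_ofReal_mul_I_re, Complex.exp_ofReal_mul_I_im] <;>
      ring_nf <;>
      simp [Complex.ext_iff, Complex.exp_ofReal_mul_I_re, Complex.exp_ofReal_mul_I_im]
  have hdet : (Lmap s θ).det = LinearMap.det (Lmap s θ).toLinearMap := rfl
  rw [hdet, ← LinearMap.det_toMatrix Complex.basisOneI, hm, Matrix.det_fin_two_of]
  linear_combination s * (Real.sin_sq_add_cos_sq θ)


lemma polarMap_injOn (p : ℂ) (b : ℝ) :
    Set.InjOn (polarMap p)
      (Complex.measurableEquivRealProd ⁻¹' ((Set.Ioo 0 b) ×ˢ (Set.Ioo (-Real.pi) Real.pi))) := by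
  intro ζ hζ ζ' hζ' heq
  simp only [Set.mem_preimage, Set.mem_prod, Set.mem_Ioo,
    Complex.measurableEquivRealProd, Homeomorph.toMeasurableEquiv_coe] at hζ hζ'
  have hζre : 0 < ζ.re ∧ ζ.re < b ∧ -Real.pi < ζ.im ∧ ζ.im < Real.pi := by
    exact ⟨hζ.1.1, hζ.1.2, hζ.2.1, hζ.2.2⟩
  have hζre' : 0 < ζ'.re ∧ ζ'.re < b ∧ -Real.pi < ζ'.im ∧ ζ'.im < Real.pi := by
    exact ⟨hζ'.1.1, hζ'.1.2, hζ'.2.1, hζ'.2.2⟩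
  have hmul : (ζ.re : ℂ) * Complex.exp (ζ.im * Complex.I)
      = (ζ'.re : ℂ) * Complex.exp (ζ'.im * Complex.I) := by
    simp only [polarMap] at heq
    exact add_left_cancel heq
  have hnorm : ‖(ζ.re : ℂ) * Complex.exp (ζ.im * Complex.I)‖ = |ζ.re| := by
    simp [Complex.norm_exp_ofReal_mul_I]
  have hnorm' : ‖(ζ'.re : ℂ) * Complex.exp (ζ'.im * Complex.I)‖ = |ζ'.re| := by
    simp [Complex.norm_exp_ofReal_mul_I]
  have hre : ζ.re = ζ'.re := by
    have h := congrArg norm hmul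
    rw [hnorm, hnorm'] at h
    rwa [abs_of_pos hζre.1, abs_of_pos hζre'.1] at h
  have hexp : Complex.exp (ζ.im * Complex.I) = Complex.exp (ζ'.im * Complex.I) := by
    have hne : (ζ.re : ℂ) ≠ 0 := by exact_mod_cast ne_of_gt hζre.1
    rw [hre] at hmul
    exact mul_left_cancel₀ (by exact_mod_cast ne_of_gt hζre'.1) hmul
  rw [Complex.exp_eq_exp_iff_exists_int] at hexp
  obtain ⟨n, hn⟩ := hexp
  have him : ζ.im = ζ'.im + n * (2 * Real.pi) := by
    have := congrArg Complex.im hn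
    simpa [Complex.mul_I_im] using this
  have hn0 : n = 0 := by
    have hpi := Real.pi_pos
    by_contra hne
    have : (1:ℝ) ≤ |(n:ℝ)| := by
      exact_mod_cast Int.one_le_abs (by exact_mod_cast hne)
    have habs : |ζ.im - ζ'.im| < 2 * Real.pi := by
      rw [abs_sub_lt_iff]
      constructor <;> nlinarith [hζre.2.2, hζre.2.1, hζre'.2.2, hζre'.2.1]
    rw [him] at habs
    simp only [add_sub_cancel_left] at habs
    rw [abs_mul, abs_of_pos (by positivity : (0:ℝ) < 2*Real.pi)] at habs
    nlinarith [abs_nonneg (n:ℝ)]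
  rw [hn0] at him
  simp at him
  exact Complex.ext hre him

lemma polar_upper (g : ℂ → ENNReal) (hg : Measurable g) (p : ℂ) (b : ℝ) :
    ∫⁻ s in Set.Ioo (0:ℝ) b, (ENNReal.ofReal s) *
      ∫⁻ θ in Set.Ioo (-Real.pi) Real.pi, g (p + s * Complex.exp (θ * Complex.I))
      ≤ ∫⁻ z, g z := by
  set R : Set (ℝ × ℝ) := (Set.Ioo (0:ℝ) b) ×ˢ (Set.Ioo (-Real.pi) Real.pi) with hR
  set T : Set ℂ := Complex.measurableEquivRealProd ⁻¹' R with hT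
  have hRmeas : MeasurableSet R := (measurableSet_Ioo).prod (measurableSet_Ioo)
  have hTmeas : MeasurableSet T := Complex.measurableEquivRealProd.measurable hRmeas
  -- g' on ℝ × ℝ
  set g' : ℝ × ℝ → ENNReal := fun q => ENNReal.ofReal q.1 * g (p + q.1 * Complex.exp (q.2 * Complex.I)) with hg'
  have hg'meas : Measurable g' := by
    apply Measurable.mul
    · exact (measurable_fst.ennreal_ofReal)
    · apply hg.comp
      apply Measurable.add measurable_const
      apply Measurable.mul
      · exact Complex.measurable_ofReal.comp measurable_fst
      · exact (Complex.continuous_exp.comp (by continuity)).measurable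
  -- Step 1: iterated integral equals lintegral over R of g'
  have step1 : (∫⁻ s in Set.Ioo (0:ℝ) b, (ENNReal.ofReal s) *
      ∫⁻ θ in Set.Ioo (-Real.pi) Real.pi, g (p + s * Complex.exp (θ * Complex.I)))
      = ∫⁻ q in R, g' q := by
    rw [hR, Measure.volume_eq_prod, ← Measure.prod_restrict, lintegral_prod _ (hg'meas.aemeasurable)]
    refine lintegral_congr fun s => ?_
    have hmθ : Measurable fun θ : ℝ => g (p + (s:ℂ) * Complex.exp ((θ:ℂ) * Complex.I)) :=
      hg.comp ((continuous_const.add (continuous_const.mul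
        (Complex.continuous_exp.comp (Complex.continuous_ofReal.mul continuous_const)))).measurable)
    rw [← lintegral_const_mul _ hmθ]
  -- Step 2: equals lintegral over T of g' ∘ equiv
  have step2 : (∫⁻ q in R, g' q) = ∫⁻ ζ in T, g' (Complex.measurableEquivRealProd ζ) := by
    rw [hT]
    exact (Complex.volume_preserving_equiv_real_prod.setLIntegral_comp_preimage_emb
      Complex.measurableEquivRealProd.measurableEmbedding g' R).symm
  -- Step 3: change of variables
  have hderiv : ∀ ζ ∈ T, HasFDerivWithinAt (polarMap p) (Lmap ζ.re ζ.im) T ζ :=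
    fun ζ _ => (polarMap_hasFDerivAt p ζ).hasFDerivWithinAt
  have hinj : Set.InjOn (polarMap p) T := polarMap_injOn p b
  have step3 := lintegral_image_eq_lintegral_abs_det_fderiv_mul volume hTmeas hderiv hinj g
  have step4 : ∫⁻ ζ in T, g' (Complex.measurableEquivRealProd ζ)
      = ∫⁻ ζ in T, ENNReal.ofReal |(Lmap ζ.re ζ.im).det| * g (polarMap p ζ) := by
    refine setLIntegral_congr_fun hTmeas (fun ζ hζ => ?_)
    have hre : 0 < ζ.re := by
      simp only [hT, hR, Set.mem_preimage, Set.mem_prod, Set.mem_Ioo,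
        Complex.measurableEquivRealProd, Homeomorph.toMeasurableEquiv_coe] at hζ
      exact hζ.1.1
    rw [Lmap_det, abs_of_pos hre]
    simp only [hg', polarMap]
    rfl
  calc (∫⁻ s in Set.Ioo (0:ℝ) b, (ENNReal.ofReal s) *
      ∫⁻ θ in Set.Ioo (-Real.pi) Real.pi, g (p + s * Complex.exp (θ * Complex.I)))
      = ∫⁻ ζ in T, ENNReal.ofReal |(Lmap ζ.re ζ.im).det| * g (polarMap p ζ) := by
        rw [step1, step2, step4]
    _ = ∫⁻ z in (polarMap p) '' T, g z := step3.symm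
    _ ≤ ∫⁻ z, g z := setLIntegral_le_lintegral _ _

/-- gradient square sum -/
def gradSq (φ : ℂ → ℂ) (z : ℂ) : ℝ := ‖fderiv ℝ φ z 1‖^2 + ‖fderiv ℝ φ z Complex.I‖^2

lemma gradSq_nonneg (φ : ℂ → ℂ) (z : ℂ) : 0 ≤ gradSq φ z := by unfold gradSq; positivity

lemma gradSq_continuous (φ : ℂ → ℂ) (hφ : ContDiff ℝ (⊤:ℕ∞) φ) : Continuous (gradSq φ) := by
  have hf : Continuous (fderiv ℝ φ) :=
    (hφ.fderiv_right (by exact_mod_cast le_top : (⊤:ℕ∞) + 1 ≤ ((⊤:ℕ∞) : WithTop ℕ∞))).continuous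
  exact ((hf.clm_apply continuous_const).norm.pow 2).add
    ((hf.clm_apply continuous_const).norm.pow 2)

lemma circle_bound (φ : ℂ → ℂ) (hφ : ContDiff ℝ (⊤:ℕ∞) φ)
    (hsupp : tsupport φ ⊆ Metric.ball 0 1)
    (p : ℂ) (hp : ‖p‖ = 1) (s : ℝ) (hs : 0 < s) (θ₁ : ℝ) (lam : ℝ) (hlam : 0 < lam) :
    ‖φ (p + s * Complex.exp (θ₁ * Complex.I))‖ ≤
      lam * s^2 * (∫ θ in Set.Ioo (-Real.pi) Real.pi,
        gradSq φ (p + s * Complex.exp (θ * Complex.I))) + Real.pi / lam := by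
  have hφd : Differentiable ℝ φ :=
    hφ.differentiable (by simp)
  set c : ℝ → ℂ := fun θ => p + s * Complex.exp (θ * Complex.I) with hc
  have hccont : Continuous c := continuous_const.add
    (continuous_const.mul (Complex.continuous_exp.comp
      (Complex.continuous_ofReal.mul continuous_const)))
  set D : ℝ → ℂ := fun θ => fderiv ℝ φ (c θ) ((s : ℂ) * (Complex.I * Complex.exp (θ * Complex.I))) with hD
  -- derivative of c
  have hcderiv : ∀ θ : ℝ, HasDerivAt c ((s:ℂ) * (Complex.I * Complex.exp (θ * Complex.I))) θ := by
    intro θ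
    have h0 : HasDerivAt (fun w : ℂ => Complex.exp (w * Complex.I))
        (Complex.I * Complex.exp ((θ:ℂ) * Complex.I)) (θ:ℂ) := by
      have := (Complex.hasDerivAt_exp ((θ:ℂ) * Complex.I)).comp (θ:ℂ)
        ((hasDerivAt_id (θ:ℂ)).mul_const Complex.I)
      exact this.congr_deriv (by ring)
    have h1 : HasDerivAt (fun θ' : ℝ => Complex.exp ((θ':ℂ) * Complex.I))
        (Complex.I * Complex.exp ((θ:ℂ) * Complex.I)) θ := h0.comp_ofReal
    have h2 := (h1.const_mul (s:ℂ)).const_add p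
    simpa [hc, mul_assoc] using h2
  have huderiv : ∀ θ : ℝ, HasDerivAt (fun t => φ (c t)) (D θ) θ := by
    intro θ
    exact (hφd.differentiableAt.hasFDerivAt.comp_hasDerivAt θ (hcderiv θ))
  -- continuity of D
  have hDcont : Continuous D := by
    have hf : Continuous (fderiv ℝ φ) :=
      (hφ.fderiv_right (by exact_mod_cast le_top : (⊤:ℕ∞) + 1 ≤ ((⊤:ℕ∞) : WithTop ℕ∞))).continuous
    exact (hf.comp hccont).clm_apply (continuous_const.mul
      (continuous_const.mul (Complex.continuous_exp.comp
        (Complex.continuous_ofReal.mul continuous_const))))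
  -- pointwise bound on ‖D θ‖
  have hDbound : ∀ θ : ℝ, ‖D θ‖ ≤ lam * s^2 * gradSq φ (c θ) + 1/(2*lam) := by
    intro θ
    have hv : ‖(s:ℂ) * (Complex.I * Complex.exp ((θ:ℂ) * Complex.I))‖ = s := by
      simp [norm_mul, Complex.norm_exp_ofReal_mul_I, abs_of_pos hs]
    have hsq : ‖D θ‖^2 ≤ 2 * s^2 * gradSq φ (c θ) := by
      have := clm_apply_sq_le (fderiv ℝ φ (c θ)) ((s:ℂ) * (Complex.I * Complex.exp ((θ:ℂ) * Complex.I)))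
      rw [hv] at this
      exact this
    have h2l : (0:ℝ) < 2*lam := by linarith
    have e1 : ‖D θ‖ ≤ (lam^2*‖D θ‖^2 + 1)/(2*lam) := by
      rw [le_div_iff₀ h2l]
      nlinarith [sq_nonneg (lam*‖D θ‖ - 1)]
    have e2 : (lam^2*‖D θ‖^2 + 1)/(2*lam) = lam/2*‖D θ‖^2 + 1/(2*lam) := by
      field_simp
    have e3 := mul_le_mul_of_nonneg_left hsq (le_of_lt (half_pos hlam))
    have e4 : lam/2*(2*s^2*gradSq φ (c θ)) = lam * s^2 * gradSq φ (c θ) := by ring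
    linarith [e1, e3]
  -- find θ₀ with c θ₀ = (1+s) • p  (so that φ (c θ₀) = 0)
  obtain ⟨θp, hθp⟩ : ∃ θp : ℝ, Complex.exp ((θp:ℂ) * Complex.I) = p := by
    refine ⟨Complex.arg p, ?_⟩
    have h0 := Complex.norm_mul_exp_arg_mul_I p
    have habs : ‖p‖ = 1 := hp
    rw [habs] at h0
    simpa using h0
  set n : ℤ := ⌈(θp - θ₁)/(2*Real.pi)⌉ with hn
  set θ₀ : ℝ := θp - 2*Real.pi*n with hθ₀
  have hpi := Real.pi_pos
  have hθ₀le : θ₀ ≤ θ₁ := by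
    have : (θp - θ₁)/(2*Real.pi) ≤ n := Int.le_ceil _
    rw [div_le_iff₀ (by positivity)] at this
    simp only [hθ₀]
    nlinarith
  have hθ₀ge : θ₁ - 2*Real.pi ≤ θ₀ := by
    have h2 : (n:ℝ) < (θp - θ₁)/(2*Real.pi) + 1 := Int.ceil_lt_add_one _
    have h2' : (n:ℝ) - 1 < (θp - θ₁)/(2*Real.pi) := by linarith
    have h3 : ((n:ℝ) - 1) * (2*Real.pi) < θp - θ₁ := by
      rw [← lt_div_iff₀ (by positivity)]
      exact h2'
    simp only [hθ₀]
    nlinarith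
  have hexpθ₀ : Complex.exp ((θ₀:ℂ) * Complex.I) = p := by
    rw [hθ₀]
    push_cast
    rw [sub_mul, Complex.exp_sub, hθp]
    have : Complex.exp (2 * (Real.pi:ℂ) * (n:ℂ) * Complex.I) = 1 := by
      have := Complex.exp_int_mul_two_pi_mul_I n
      convert this using 2
      push_cast
      ring
    rw [show ((2:ℂ) * Real.pi * n * Complex.I) = (2 * (Real.pi:ℂ) * (n:ℂ) * Complex.I) by push_cast; ring] at this ⊢
    rw [this]
    simp
  have hφθ₀ : φ (c θ₀) = 0 := by
    apply image_eq_zero_of_notMem_tsupport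
    intro hmem
    have := hsupp hmem
    rw [Metric.mem_ball] at this
    have hnorm : ‖c θ₀‖ = 1 + s := by
      have hcv : c θ₀ = (((1:ℝ) + s : ℝ):ℂ) * p := by
        simp only [hc, hexpθ₀]
        push_cast
        ring
      rw [hcv, norm_mul, hp, mul_one, Complex.norm_real]
      exact abs_of_pos (by linarith)
    rw [dist_eq_norm, sub_zero, hnorm] at this
    linarith
  -- FTC
  have hFTC : φ (c θ₁) = ∫ t in θ₀..θ₁, D t := by
    rw [intervalIntegral.integral_eq_sub_of_hasDerivAt
      (fun t _ => huderiv t) (hDcont.intervalIntegrable _ _)]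
    rw [hφθ₀, sub_zero]
  have hnormle : ‖φ (c θ₁)‖ ≤ ∫ t in θ₀..θ₁, ‖D t‖ := by
    rw [hFTC]
    exact intervalIntegral.norm_integral_le_integral_norm hθ₀le
  have hstep2 : (∫ t in θ₀..θ₁, ‖D t‖) ≤ ∫ t in (θ₁ - 2*Real.pi)..θ₁, ‖D t‖ := by
    apply intervalIntegral.integral_mono_interval hθ₀ge hθ₀le le_rfl
    · exact Filter.Eventually.of_forall fun t => norm_nonneg _
    · exact hDcont.norm.intervalIntegrable _ _
  have hstep3 : (∫ t in (θ₁ - 2*Real.pi)..θ₁, ‖D t‖) ≤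
      ∫ t in (θ₁ - 2*Real.pi)..θ₁, (lam * s^2 * gradSq φ (c t) + 1/(2*lam)) := by
    apply intervalIntegral.integral_mono_on (by linarith)
    · exact hDcont.norm.intervalIntegrable _ _
    · exact ((continuous_const.mul ((gradSq_continuous φ hφ).comp hccont)).add
        continuous_const).intervalIntegrable _ _
    · exact fun t _ => hDbound t
  have hGc : Continuous fun t => gradSq φ (c t) :=
    (gradSq_continuous φ hφ).comp hccont
  have hper : Function.Periodic (fun t => gradSq φ (c t)) (2*Real.pi) := by
    intro t
    simp only [hc]
    congr 2
    push_cast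
    rw [add_mul, Complex.exp_add]
    have : Complex.exp ((2:ℂ) * Real.pi * Complex.I) = 1 := Complex.exp_two_pi_mul_I
    rw [this, mul_one]
  have hshift : (∫ t in (θ₁ - 2*Real.pi)..θ₁, gradSq φ (c t))
      = ∫ t in (-Real.pi)..Real.pi, gradSq φ (c t) := by
    have := hper.intervalIntegral_add_eq (θ₁ - 2*Real.pi) (-Real.pi)
    simpa [show θ₁ - 2*Real.pi + 2*Real.pi = θ₁ by ring,
      show -Real.pi + 2*Real.pi = Real.pi by ring] using this
  have hsplit : (∫ t in (θ₁ - 2*Real.pi)..θ₁, (lam * s^2 * gradSq φ (c t) + 1/(2*lam)))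
      = lam * s^2 * (∫ t in (-Real.pi)..Real.pi, gradSq φ (c t)) + Real.pi/lam := by
    rw [intervalIntegral.integral_add (f := fun t => lam * s^2 * gradSq φ (c t)) ((continuous_const.mul hGc).intervalIntegrable _ _)
      (intervalIntegrable_const (c := 1/(2*lam))),
      intervalIntegral.integral_const_mul, hshift]
    simp only [intervalIntegral.integral_const, smul_eq_mul]
    have : (θ₁ - (θ₁ - 2*Real.pi)) * (1/(2*lam)) = Real.pi/lam := by
      field_simp
      ring
    rw [this]
  have hIoo : (∫ t in (-Real.pi)..Real.pi, gradSq φ (c t))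
      = ∫ θ in Set.Ioo (-Real.pi) Real.pi, gradSq φ (c θ) := by
    rw [intervalIntegral.integral_of_le (by linarith), ← integral_Ioc_eq_integral_Ioo]
  calc ‖φ (c θ₁)‖ ≤ ∫ t in θ₀..θ₁, ‖D t‖ := hnormle
    _ ≤ ∫ t in (θ₁ - 2*Real.pi)..θ₁, ‖D t‖ := hstep2
    _ ≤ ∫ t in (θ₁ - 2*Real.pi)..θ₁, (lam * s^2 * gradSq φ (c t) + 1/(2*lam)) := hstep3
    _ = lam * s^2 * (∫ t in (-Real.pi)..Real.pi, gradSq φ (c t)) + Real.pi/lam := hsplit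
    _ = lam * s^2 * (∫ θ in Set.Ioo (-Real.pi) Real.pi, gradSq φ (c θ)) + Real.pi/lam := by
        rw [hIoo]

/-- If `h ∈ C(𝔻, ℂ) ∩ W^{1,2}(𝔻, ℂ)` and `h - f ∈ W^{1,2}_0(𝔻, ℂ)` for a continuous
`f : closure 𝔻 → ℂ`, then for every connected `C ⊆ 𝔻` whose closure meets `𝕊¹`, the
sets `f(closure C ∩ 𝕊¹)` and `closure (h(C))` intersect. -/
theorem sobolev_boundary_topology
    (h f : ℂ → ℂ)
    (hC : ContinuousOn h unitDisk) (hW : MemW12 unitDisk h)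
    (hfC : ContinuousOn f (closure unitDisk))
    (hW0 : MemW120 unitDisk (fun z => h z - f z))
    (C : Set ℂ) (hCsub : C ⊆ unitDisk) (hCconn : IsPreconnected C)
    (hCbd : (closure C ∩ unitCircle).Nonempty) :
    (f '' (closure C ∩ unitCircle) ∩ closure (h '' C)).Nonempty := by
  classical
  by_contra hne
  rw [Set.not_nonempty_iff_eq_empty] at hne
  obtain ⟨p, hpC, hpS⟩ := hCbd
  have hpnorm : ‖p‖ = 1 := by
    rwa [unitCircle, mem_sphere_zero_iff_norm] at hpS
  have hpdisj : f p ∉ closure (h '' C) := by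
    intro hmem
    have himg : f p ∈ f '' (closure C ∩ unitCircle) := ⟨p, ⟨hpC, hpS⟩, rfl⟩
    exact Set.eq_empty_iff_forall_notMem.mp hne (f p) ⟨himg, hmem⟩
  obtain ⟨ε, hε, hball⟩ := Metric.isOpen_iff.mp isClosed_closure.isOpen_compl (f p) hpdisj
  have hCd : ∀ z ∈ C, ε ≤ dist (f p) (h z) := by
    intro z hz
    by_contra hlt
    push_neg at hlt
    have h1 : h z ∈ Metric.ball (f p) ε := by rwa [Metric.mem_ball']
    exact hball h1 (subset_closure ⟨z, hz, rfl⟩)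
  have hCne : C.Nonempty := closure_nonempty_iff.mp ⟨p, hpC⟩
  obtain ⟨q, hq⟩ := hCne
  have hqd : q ∈ unitDisk := hCsub hq
  have hqnorm : ‖q‖ < 1 := by rwa [unitDisk, mem_ball_zero_iff] at hqd
  have hqp : q ≠ p := fun hqp => by rw [hqp, hpnorm] at hqnorm; exact lt_irrefl _ hqnorm
  set d : ℝ := dist q p with hdd
  have hd : 0 < d := dist_pos.mpr hqp
  have hpcl : p ∈ closure unitDisk := by
    rw [unitDisk, closure_ball (0:ℂ) one_ne_zero, mem_closedBall_zero_iff, hpnorm]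
  have hfp : ContinuousWithinAt f (closure unitDisk) p := hfC p hpcl
  obtain ⟨δ₁, hδ₁, hfδ⟩ := Metric.continuousWithinAt_iff.mp hfp (ε/2) (by linarith)
  set δ : ℝ := min (min δ₁ d) 1 with hδdef
  have hδpos : 0 < δ := lt_min (lt_min hδ₁ hd) one_pos
  have hδle₁ : δ ≤ δ₁ := le_trans (min_le_left _ _) (min_le_left _ _)
  have hδled : δ ≤ d := le_trans (min_le_left _ _) (min_le_right _ _)
  set N : Set ℂ := (unitDisk ∩ Metric.ball p δ) ∩
    (fun z => dist (h z) (f z)) ⁻¹' (Set.Ioi (ε/4)) with hNdef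
  have hUopen : IsOpen (unitDisk ∩ Metric.ball p δ) := Metric.isOpen_ball.inter Metric.isOpen_ball
  have hfdisk : ContinuousOn f unitDisk := hfC.mono subset_closure
  have hNopen : IsOpen N := by
    apply ContinuousOn.isOpen_inter_preimage _ hUopen isOpen_Ioi
    exact continuous_dist.comp_continuousOn
      ((hC.mono Set.inter_subset_left).prodMk (hfdisk.mono Set.inter_subset_left))
  have hNsub : N ⊆ unitDisk := fun z hz => hz.1.1
  have hCN : ∀ z ∈ C, dist z p < δ → z ∈ N := by
    intro z hz hzp
    refine ⟨⟨hCsub hz, by rwa [Metric.mem_ball]⟩, ?_⟩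
    have h1 : dist (f z) (f p) < ε/2 := by
      apply hfδ (subset_closure (hCsub hz))
      exact lt_of_lt_of_le hzp hδle₁
    have h2 : ε ≤ dist (f p) (h z) := hCd z hz
    have h3 : dist (f p) (h z) ≤ dist (f p) (f z) + dist (f z) (h z) := dist_triangle _ _ _
    have h4 : dist (h z) (f z) = dist (f z) (h z) := dist_comm _ _
    have h5 : dist (f p) (f z) = dist (f z) (f p) := dist_comm _ _
    simp only [Set.mem_preimage, Set.mem_Ioi]
    linarith
  obtain ⟨gx, gy, hgx, hgy, hwL2, hgxL2, hgyL2, φ0, hφ0props, hφ0w, hφ0gx, hφ0gy⟩ := hW0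
  set w : ℂ → ℂ := fun z => h z - f z with hwdef
  set μD := volume.restrict unitDisk with hμD
  have hwm : AEStronglyMeasurable w μD := hwL2.aestronglyMeasurable
  have hφ0m : ∀ n, AEStronglyMeasurable (φ0 n) μD :=
    fun n => ((hφ0props n).1.continuous).aestronglyMeasurable
  have htm : TendstoInMeasure μD φ0 atTop w := by
    apply tendstoInMeasure_of_tendsto_eLpNorm (p := 2) (by norm_num) hφ0m hwm
    have hcong : ∀ n, eLpNorm (φ0 n - w) 2 μD = eLpNorm (fun z => w z - φ0 n z) 2 μD := by
      intro n
      rw [eLpNorm_sub_comm]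
      rfl
    simp only [hcong]
    exact hφ0w
  obtain ⟨ns, hns, hae⟩ := htm.exists_seq_tendsto_ae
  set ψ : ℕ → ℂ → ℂ := fun j => φ0 (ns j) with hψdef
  have hψsm : ∀ j, ContDiff ℝ (⊤:ℕ∞) (ψ j) := fun j => (hφ0props (ns j)).1
  have hψsupp : ∀ j, tsupport (ψ j) ⊆ Metric.ball 0 1 := fun j => (hφ0props (ns j)).2.2
  have hψgx : Tendsto (fun j => eLpNorm (fun z => gx z - fderiv ℝ (ψ j) z 1) 2 μD)
      atTop (nhds 0) := hφ0gx.comp hns.tendsto_atTop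
  have hψgy : Tendsto (fun j => eLpNorm (fun z => gy z - fderiv ℝ (ψ j) z Complex.I) 2 μD)
      atTop (nhds 0) := hφ0gy.comp hns.tendsto_atTop
  have hae0 : μD {z | ¬ Tendsto (fun i => ψ i z) atTop (nhds (w z))} = 0 := by
    rw [← MeasureTheory.ae_iff]
    exact hae
  obtain ⟨S, hSsup, hSmeas, hS0⟩ := exists_measurable_superset_of_null hae0
  have hDiskMeas : MeasurableSet unitDisk := Metric.isOpen_ball.measurableSet
  set S' : Set ℂ := S ∩ unitDisk with hS'def
  have hS'meas : MeasurableSet S' := hSmeas.inter hDiskMeas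
  have hS'0 : volume S' = 0 := by
    have h0 := hS0
    rwa [hμD, Measure.restrict_apply hSmeas] at h0
  have hconv : ∀ z ∈ unitDisk, z ∉ S' → Tendsto (fun i => ψ i z) atTop (nhds (w z)) := by
    intro z hz hz'
    by_contra hnc
    exact hz' ⟨hSsup hnc, hz⟩
  -- curve continuity
  have hccont : ∀ s : ℝ, Continuous (fun θ : ℝ => p + (s:ℂ) * Complex.exp (θ * Complex.I)) :=
    fun s => continuous_const.add (continuous_const.mul (Complex.continuous_exp.comp
      (Complex.continuous_ofReal.mul continuous_const)))
  -- bad θ-sets are null for a.e. s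
  have hbadθ : ∀ᵐ s : ℝ ∂(volume.restrict (Set.Ioo (0:ℝ) δ)),
      (volume.restrict (Set.Ioo (-Real.pi) Real.pi))
        {θ : ℝ | p + (s:ℂ) * Complex.exp (θ * Complex.I) ∈ S'} = 0 := by
    have hindm : Measurable (S'.indicator (fun _ => (1:ENNReal))) :=
      measurable_const.indicator hS'meas
    have hup := polar_upper (S'.indicator (fun _ => (1:ENNReal))) hindm p δ
    have hzero : (∫⁻ z, S'.indicator (fun _ => (1:ENNReal)) z) = 0 := by
      rw [show S'.indicator (fun _ => (1:ENNReal)) = S'.indicator 1 from rfl,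
        lintegral_indicator_one hS'meas]
      exact hS'0
    rw [hzero, le_zero_iff] at hup
    have hFmeas : Measurable (fun s : ℝ => ENNReal.ofReal s *
        ∫⁻ θ in Set.Ioo (-Real.pi) Real.pi,
          S'.indicator (fun _ => (1:ENNReal)) (p + s * Complex.exp (θ * Complex.I))) := by
      apply Measurable.mul (measurable_id.ennreal_ofReal)
      apply Measurable.lintegral_prod_right
      apply hindm.comp
      apply Measurable.add measurable_const
      exact (Complex.measurable_ofReal.comp measurable_fst).mul
        ((Complex.continuous_exp.comp (Complex.continuous_ofReal.mul
          continuous_const)).measurable.comp measurable_snd)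
    have h0 := (lintegral_eq_zero_iff hFmeas).mp hup
    filter_upwards [h0, ae_restrict_mem measurableSet_Ioo] with s hs hsmem
    have hspos : 0 < s := hsmem.1
    have hsne : ENNReal.ofReal s ≠ 0 := by simp [ENNReal.ofReal_eq_zero, not_le, hspos]
    have hinner : (∫⁻ θ in Set.Ioo (-Real.pi) Real.pi,
        S'.indicator (fun _ => (1:ENNReal)) (p + s * Complex.exp (θ * Complex.I))) = 0 := by
      rcases mul_eq_zero.mp hs with h' | h'
      · exact absurd h' hsne
      · exact h'
    have hintm : Measurable (fun θ : ℝ =>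
        S'.indicator (fun _ => (1:ENNReal)) (p + s * Complex.exp (θ * Complex.I))) :=
      hindm.comp (hccont s).measurable
    have haez := (lintegral_eq_zero_iff hintm).mp hinner
    have hbad := MeasureTheory.ae_iff.mp haez
    refine measure_mono_null ?_ hbad
    intro θ hθ
    simp only [Set.mem_setOf_eq] at hθ ⊢
    rw [Set.indicator_of_mem hθ]
    exact one_ne_zero
  -- the slice functionals
  set Fj : ℕ → ℝ → ENNReal := fun j s => ENNReal.ofReal s *
    ∫⁻ θ in Set.Ioo (-Real.pi) Real.pi,
      ENNReal.ofReal (gradSq (ψ j) (p + s * Complex.exp (θ * Complex.I))) with hFjdef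
  have hFjmeas : ∀ j, Measurable (Fj j) := by
    intro j
    apply Measurable.mul (measurable_id.ennreal_ofReal)
    apply Measurable.lintegral_prod_right
    apply Measurable.ennreal_ofReal
    apply (gradSq_continuous (ψ j) (hψsm j)).measurable.comp
    apply Measurable.add measurable_const
    exact (Complex.measurable_ofReal.comp measurable_fst).mul
      ((Complex.continuous_exp.comp (Complex.continuous_ofReal.mul
        continuous_const)).measurable.comp measurable_snd)
  -- MAIN per-slice lower bound
  have claim_main : ∀ᵐ s : ℝ ∂(volume.restrict (Set.Ioo (0:ℝ) δ)),
      ENNReal.ofReal (ε^2/(64*Real.pi) * s⁻¹) ≤ liminf (fun j => Fj j s) atTop := by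
    filter_upwards [hbadθ, ae_restrict_mem measurableSet_Ioo] with s hPs hsmem
    have hspos : 0 < s := hsmem.1
    have hsδ : s < δ := hsmem.2
    -- find a point of C on the sphere of radius s
    obtain ⟨z₁, hz₁C, hz₁d⟩ : ∃ z₁ ∈ C, dist z₁ p = s := by
      have himg : IsPreconnected ((fun z => dist z p) '' C) :=
        hCconn.image _ (continuous_id.dist continuous_const).continuousOn
      have hoc : Set.OrdConnected ((fun z => dist z p) '' C) := himg.ordConnected
      obtain ⟨z₀, hz₀C, hz₀d⟩ : ∃ z₀ ∈ C, dist z₀ p < s := by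
        obtain ⟨z₀, hz₀, hz₀d⟩ := Metric.mem_closure_iff.mp hpC s hspos
        exact ⟨z₀, hz₀, by rwa [dist_comm]⟩
      have hsmem2 : s ∈ Set.Icc (dist z₀ p) d := ⟨le_of_lt hz₀d, le_trans (le_of_lt hsδ) hδled⟩
      have := hoc.out ⟨z₀, hz₀C, rfl⟩ ⟨q, hq, rfl⟩ hsmem2
      obtain ⟨z₁, hz₁C, hz₁d⟩ := this
      exact ⟨z₁, hz₁C, hz₁d⟩
    have hz₁N : z₁ ∈ N := hCN z₁ hz₁C (by rw [hz₁d] at *; exact hsδ)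
    -- find θs in the open interval with the curve point in N
    obtain ⟨θs, hθsI, hθsN⟩ : ∃ θs ∈ Set.Ioo (-Real.pi) Real.pi,
        p + (s:ℂ) * Complex.exp (θs * Complex.I) ∈ N := by
      have hz₁p : z₁ - p ≠ 0 := sub_ne_zero.mpr (by
        rw [← dist_pos, hz₁d]
        exact hspos)
      have habs0 : ‖z₁ - p‖ = s := by
        rw [← Complex.dist_eq]
        exact hz₁d
      have habs : ((‖z₁ - p‖ : ℝ) : ℂ) = (s:ℂ) := by rw [habs0]
      have harg := Complex.norm_mul_exp_arg_mul_I (z₁ - p)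
      rw [habs] at harg
      -- z₁ = p + s * exp(arg * I)
      have hz₁eq : z₁ = p + (s:ℂ) * Complex.exp ((Complex.arg (z₁ - p)) * Complex.I) := by
        rw [harg]; ring
      set θa := Complex.arg (z₁ - p) with hθa
      have hθa1 : -Real.pi < θa := Complex.neg_pi_lt_arg _
      have hθa2 : θa ≤ Real.pi := Complex.arg_le_pi _
      rcases lt_or_eq_of_le hθa2 with hlt | heqpi
      · exact ⟨θa, ⟨hθa1, hlt⟩, by rw [← hz₁eq]; exact hz₁N⟩
      · -- θa = π : approach from inside
        have hcθa : p + (s:ℂ) * Complex.exp (θa * Complex.I) ∈ N := by rw [← hz₁eq]; exact hz₁N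
        have hcont : ContinuousAt (fun θ : ℝ => p + (s:ℂ) * Complex.exp (θ * Complex.I)) θa :=
          (hccont s).continuousAt
        have hev : ∀ᶠ θ : ℝ in nhds θa,
            p + (s:ℂ) * Complex.exp (θ * Complex.I) ∈ N :=
          hcont.eventually_mem (hNopen.mem_nhds hcθa)
        have hπcl : θa ∈ closure (Set.Ioo (-Real.pi) Real.pi) := by
          rw [closure_Ioo (by linarith [Real.pi_pos] : -Real.pi ≠ Real.pi)]
          exact ⟨le_of_lt hθa1, hθa2⟩
        obtain ⟨θs, hθs1, hθs2⟩ := mem_closure_iff_nhds.mp hπcl _ hev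
        exact ⟨θs, hθs2, hθs1⟩
    -- choose a good θ avoiding S'
    obtain ⟨θg, hθgI, hθgN, hθgS⟩ : ∃ θg ∈ Set.Ioo (-Real.pi) Real.pi,
        p + (s:ℂ) * Complex.exp (θg * Complex.I) ∈ N ∧
        p + (s:ℂ) * Complex.exp (θg * Complex.I) ∉ S' := by
      set T : Set ℝ := Set.Ioo (-Real.pi) Real.pi ∩
        (fun θ : ℝ => p + (s:ℂ) * Complex.exp (θ * Complex.I)) ⁻¹' N with hTdef
      have hTopen : IsOpen T := isOpen_Ioo.inter (hNopen.preimage (hccont s))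
      have hTne : T.Nonempty := ⟨θs, hθsI, hθsN⟩
      have hTpos : 0 < volume T := hTopen.measure_pos volume hTne
      by_contra hcon
      push_neg at hcon
      have hTsub : T ⊆ {θ | p + (s:ℂ) * Complex.exp (θ * Complex.I) ∈ S'} := by
        intro θ hθ
        exact hcon θ hθ.1 hθ.2
      have : (volume.restrict (Set.Ioo (-Real.pi) Real.pi)) T = 0 :=
        measure_mono_null hTsub hPs
      rw [Measure.restrict_apply' measurableSet_Ioo] at this
      have hTinter : T ∩ Set.Ioo (-Real.pi) Real.pi = T :=
        Set.inter_eq_self_of_subset_left (fun θ hθ => hθ.1)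
      rw [hTinter] at this
      exact absurd this (ne_of_gt hTpos)
    set zs : ℂ := p + (s:ℂ) * Complex.exp (θg * Complex.I) with hzs
    have hzsN : zs ∈ N := hθgN
    have hzsD : zs ∈ unitDisk := hNsub hzsN
    have hzsconv : Tendsto (fun i => ψ i zs) atTop (nhds (w zs)) := hconv zs hzsD hθgS
    have hzsw : ε/4 < ‖w zs‖ := by
      have := hzsN.2
      simp only [Set.mem_preimage, Set.mem_Ioi] at this
      rwa [hwdef, ← dist_eq_norm]
    -- eventually the approximations are large at zs
    have hev : ∀ᶠ j in atTop, ε/4 < ‖ψ j zs‖ := by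
      have hn : Tendsto (fun j => ‖ψ j zs‖) atTop (nhds ‖w zs‖) := hzsconv.norm
      exact hn.eventually (eventually_gt_nhds hzsw)
    -- eventually Fj j s is bounded below
    have hevF : ∀ᶠ j in atTop, ENNReal.ofReal (ε^2/(64*Real.pi) * s⁻¹) ≤ Fj j s := by
      filter_upwards [hev] with j hj
      set lam : ℝ := 8*Real.pi/ε with hlam
      have hpi := Real.pi_pos
      have hlampos : 0 < lam := by positivity
      have hcb := circle_bound (ψ j) (hψsm j) (hψsupp j) p hpnorm s hspos θg lam hlampos
      set J : ℝ := ∫ θ in Set.Ioo (-Real.pi) Real.pi,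
        gradSq (ψ j) (p + s * Complex.exp (θ * Complex.I)) with hJ
      have hπlam : Real.pi/lam = ε/8 := by
        rw [hlam]
        field_simp
      have hJb : ε/4 < lam * s^2 * J + ε/8 := by
        rw [← hπlam]
        exact lt_of_lt_of_le hj hcb
      have hJlb : ε^2/(64*Real.pi) * s⁻¹ ≤ s * J := by
        have h1 : ε/8 < lam * s^2 * J := by linarith
        have h2 : ε/8 / lam ≤ s^2 * J := by
          rw [div_le_iff₀ hlampos]
          nlinarith
        have h3 : ε/8 / lam = ε^2/(64*Real.pi) := by
          rw [hlam]
          field_simp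
          ring
        rw [h3] at h2
        calc ε^2/(64*Real.pi) * s⁻¹ ≤ (s^2 * J) * s⁻¹ := by
              apply mul_le_mul_of_nonneg_right h2
              positivity
          _ = s * J := by
              field_simp
      -- convert to ENNReal
      have hJint : IntegrableOn (fun θ : ℝ =>
          gradSq (ψ j) (p + s * Complex.exp (θ * Complex.I))) (Set.Ioo (-Real.pi) Real.pi) := by
        apply IntegrableOn.mono_set _ Set.Ioo_subset_Icc_self
        exact (((gradSq_continuous _ (hψsm j)).comp (hccont s)).continuousOn).integrableOn_Icc
      have hFeq : Fj j s = ENNReal.ofReal (s * J) := by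
        rw [hFjdef]
        simp only
        rw [← ofReal_integral_eq_lintegral_ofReal hJint
          (Filter.Eventually.of_forall (fun θ => gradSq_nonneg _ _)), ← ENNReal.ofReal_mul
          (le_of_lt hspos)]
      rw [hFeq]
      exact ENNReal.ofReal_le_ofReal hJlb
    exact le_liminf_of_le (by isBoundedDefault) hevF
    -- global upper bound
  set A : ℕ → ENNReal := fun j => ∫⁻ z, ENNReal.ofReal (gradSq (ψ j) z) with hAdef
  have hgradmeas : ∀ j, Measurable fun z => ENNReal.ofReal (gradSq (ψ j) z) :=
    fun j => ((gradSq_continuous _ (hψsm j)).measurable).ennreal_ofReal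
  have hupper : ∀ j, (∫⁻ s in Set.Ioo (0:ℝ) δ, Fj j s) ≤ A j := by
    intro j
    exact polar_upper _ (hgradmeas j) p δ
  -- key L² identity
  have hkey : ∀ u : ℂ → ℂ, (∫⁻ z, ENNReal.ofReal (‖u z‖^2) ∂μD) = (eLpNorm u 2 μD)^2 := by
    intro u
    rw [eLpNorm_eq_lintegral_rpow_enorm_toReal (by norm_num) (by norm_num)]
    rw [← ENNReal.rpow_natCast _ 2, ← ENNReal.rpow_mul]
    norm_num
  -- A j in terms of eLpNorms
  have hAeq : ∀ j, A j = (eLpNorm (fun z => fderiv ℝ (ψ j) z 1) 2 μD)^2 +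
      (eLpNorm (fun z => fderiv ℝ (ψ j) z Complex.I) 2 μD)^2 := by
    intro j
    have hvan : ∀ z, z ∉ unitDisk → gradSq (ψ j) z = 0 := by
      intro z hz
      have hzf : fderiv ℝ (ψ j) z = 0 := by
        by_contra hne0
        exact hz (hψsupp j (support_fderiv_subset ℝ hne0))
      simp [gradSq, hzf]
    have hindic : (fun z => ENNReal.ofReal (gradSq (ψ j) z))
        = unitDisk.indicator (fun z => ENNReal.ofReal (gradSq (ψ j) z)) := by
      funext z
      by_cases hz : z ∈ unitDisk
      · rw [Set.indicator_of_mem hz]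
      · rw [Set.indicator_of_notMem hz, hvan z hz]
        simp
    have hmeas1 : Measurable fun z => ENNReal.ofReal (‖fderiv ℝ (ψ j) z 1‖^2) := by
      apply Measurable.ennreal_ofReal
      have hf : Continuous (fderiv ℝ (ψ j)) :=
        ((hψsm j).fderiv_right
          (by exact_mod_cast le_top : (⊤:ℕ∞) + 1 ≤ ((⊤:ℕ∞) : WithTop ℕ∞))).continuous
      exact ((hf.clm_apply continuous_const).norm.pow 2).measurable
    calc A j = ∫⁻ z in unitDisk, ENNReal.ofReal (gradSq (ψ j) z) := by
          rw [hAdef]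
          simp only
          conv_lhs => rw [hindic]
          rw [lintegral_indicator hDiskMeas]
      _ = ∫⁻ z, (ENNReal.ofReal (‖fderiv ℝ (ψ j) z 1‖^2) +
            ENNReal.ofReal (‖fderiv ℝ (ψ j) z Complex.I‖^2)) ∂μD := by
          rw [hμD]
          refine lintegral_congr fun z => ?_
          rw [gradSq, ENNReal.ofReal_add (by positivity) (by positivity)]
      _ = (∫⁻ z, ENNReal.ofReal (‖fderiv ℝ (ψ j) z 1‖^2) ∂μD) +
            ∫⁻ z, ENNReal.ofReal (‖fderiv ℝ (ψ j) z Complex.I‖^2) ∂μD := by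
          rw [lintegral_add_left hmeas1]
      _ = _ := by rw [hkey, hkey]
  -- eLpNorm bounds, eventually in j
  have hD1cont : ∀ j, Continuous fun z => fderiv ℝ (ψ j) z 1 := by
    intro j
    have hf : Continuous (fderiv ℝ (ψ j)) :=
      ((hψsm j).fderiv_right
        (by exact_mod_cast le_top : (⊤:ℕ∞) + 1 ≤ ((⊤:ℕ∞) : WithTop ℕ∞))).continuous
    exact hf.clm_apply continuous_const
  have hDIcont : ∀ j, Continuous fun z => fderiv ℝ (ψ j) z Complex.I := by
    intro j
    have hf : Continuous (fderiv ℝ (ψ j)) :=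
      ((hψsm j).fderiv_right
        (by exact_mod_cast le_top : (⊤:ℕ∞) + 1 ≤ ((⊤:ℕ∞) : WithTop ℕ∞))).continuous
    exact hf.clm_apply continuous_const
  set M : ENNReal := (eLpNorm gx 2 μD + 1)^2 + (eLpNorm gy 2 μD + 1)^2 with hMdef
  have hMne : M ≠ ⊤ := by
    have hgx' : eLpNorm gx 2 μD ≠ ⊤ := hgxL2.eLpNorm_ne_top
    have hgy' : eLpNorm gy 2 μD ≠ ⊤ := hgyL2.eLpNorm_ne_top
    rw [hMdef]
    apply ENNReal.add_ne_top.mpr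
    constructor
    · exact ENNReal.pow_ne_top (ENNReal.add_ne_top.mpr ⟨hgx', ENNReal.one_ne_top⟩)
    · exact ENNReal.pow_ne_top (ENNReal.add_ne_top.mpr ⟨hgy', ENNReal.one_ne_top⟩)
  have hAbound : ∀ᶠ j in atTop, A j ≤ M := by
    have hev1 : ∀ᶠ j in atTop,
        eLpNorm (fun z => gx z - fderiv ℝ (ψ j) z 1) 2 μD ≤ 1 :=
      hψgx.eventually (eventually_le_nhds (by norm_num))
    have hev2 : ∀ᶠ j in atTop,
        eLpNorm (fun z => gy z - fderiv ℝ (ψ j) z Complex.I) 2 μD ≤ 1 :=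
      hψgy.eventually (eventually_le_nhds (by norm_num))
    filter_upwards [hev1, hev2] with j h1 h2
    have tri : ∀ (u g0 : ℂ → ℂ), Continuous u → AEStronglyMeasurable g0 μD →
        eLpNorm u 2 μD ≤ eLpNorm (fun z => g0 z - u z) 2 μD + eLpNorm g0 2 μD := by
      intro u g0 hu hg0
      have hdecomp : u = (fun z => u z - g0 z) + g0 := by
        funext z
        simp
      calc eLpNorm u 2 μD = eLpNorm ((fun z => u z - g0 z) + g0) 2 μD := by rw [← hdecomp]
        _ ≤ eLpNorm (fun z => u z - g0 z) 2 μD + eLpNorm g0 2 μD :=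
            eLpNorm_add_le (hu.aestronglyMeasurable.sub hg0) hg0 one_le_two
        _ = eLpNorm (fun z => g0 z - u z) 2 μD + eLpNorm g0 2 μD := by
            rw [show (fun z => u z - g0 z) = u - g0 from rfl,
              show (fun z => g0 z - u z) = g0 - u from rfl, eLpNorm_sub_comm]
    have b1 : eLpNorm (fun z => fderiv ℝ (ψ j) z 1) 2 μD ≤ eLpNorm gx 2 μD + 1 := by
      have := tri (fun z => fderiv ℝ (ψ j) z 1) gx (hD1cont j) hgxL2.aestronglyMeasurable
      calc eLpNorm (fun z => fderiv ℝ (ψ j) z 1) 2 μD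
          ≤ eLpNorm (fun z => gx z - fderiv ℝ (ψ j) z 1) 2 μD + eLpNorm gx 2 μD := this
        _ ≤ 1 + eLpNorm gx 2 μD := add_le_add_left h1 _
        _ = eLpNorm gx 2 μD + 1 := add_comm _ _
    have b2 : eLpNorm (fun z => fderiv ℝ (ψ j) z Complex.I) 2 μD ≤ eLpNorm gy 2 μD + 1 := by
      have := tri (fun z => fderiv ℝ (ψ j) z Complex.I) gy (hDIcont j) hgyL2.aestronglyMeasurable
      calc eLpNorm (fun z => fderiv ℝ (ψ j) z Complex.I) 2 μD
          ≤ eLpNorm (fun z => gy z - fderiv ℝ (ψ j) z Complex.I) 2 μD + eLpNorm gy 2 μD := this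
        _ ≤ 1 + eLpNorm gy 2 μD := add_le_add_left h2 _
        _ = eLpNorm gy 2 μD + 1 := add_comm _ _
    rw [hAeq j, hMdef]
    exact add_le_add (pow_le_pow_left₀ (by positivity) b1 2) (pow_le_pow_left₀ (by positivity) b2 2)
  -- choose r
  have hpi := Real.pi_pos
  set Y : ℝ := 64*Real.pi*(M.toReal + 1)/ε^2 with hYdef
  have hYpos : 0 < Y := by
    have : 0 ≤ M.toReal := ENNReal.toReal_nonneg
    positivity
  set r : ℝ := δ * Real.exp (-Y) with hrdef
  have hrpos : 0 < r := mul_pos hδpos (Real.exp_pos _)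
  have hrδ : r < δ := by
    have : Real.exp (-Y) < 1 := Real.exp_lt_one_iff.mpr (by linarith)
    calc r = δ * Real.exp (-Y) := hrdef
      _ < δ * 1 := by exact mul_lt_mul_of_pos_left this hδpos
      _ = δ := mul_one δ
  have hlogeq : Real.log (δ/r) = Y := by
    have hδr : δ / r = Real.exp Y := by
      rw [hrdef, Real.exp_neg]
      field_simp
    rw [hδr, Real.log_exp]
  -- lower bound for the logarithmic integral
  have hIeq : ENNReal.ofReal (ε^2/(64*Real.pi) * Real.log (δ/r))
      ≤ ∫⁻ s in Set.Ioo r δ, ENNReal.ofReal (ε^2/(64*Real.pi) * s⁻¹) := by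
    have hcontOn : ContinuousOn (fun s : ℝ => ε^2/(64*Real.pi) * s⁻¹) (Set.Icc r δ) := by
      apply ContinuousOn.mul continuousOn_const
      apply ContinuousOn.inv₀ continuousOn_id
      intro s hs
      exact ne_of_gt (lt_of_lt_of_le hrpos hs.1)
    have hint : IntegrableOn (fun s : ℝ => ε^2/(64*Real.pi) * s⁻¹) (Set.Ioo r δ) :=
      (hcontOn.integrableOn_Icc).mono_set Set.Ioo_subset_Icc_self
    have hnn : 0 ≤ᵐ[volume.restrict (Set.Ioo r δ)] fun s : ℝ => ε^2/(64*Real.pi) * s⁻¹ := by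
      filter_upwards [ae_restrict_mem measurableSet_Ioo] with s hs
      have : 0 < s := lt_trans hrpos hs.1
      positivity
    rw [← ofReal_integral_eq_lintegral_ofReal hint hnn]
    apply ENNReal.ofReal_le_ofReal
    have hIooeq : (∫ s in Set.Ioo r δ, ε^2/(64*Real.pi) * s⁻¹)
        = ε^2/(64*Real.pi) * Real.log (δ/r) := by
      rw [← MeasureTheory.integral_Ioc_eq_integral_Ioo,
        ← intervalIntegral.integral_of_le (le_of_lt hrδ),
        intervalIntegral.integral_const_mul, integral_inv_of_pos hrpos hδpos]
    rw [hIooeq]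
  -- chain of inequalities
  have hchain : (∫⁻ s in Set.Ioo r δ, ENNReal.ofReal (ε^2/(64*Real.pi) * s⁻¹))
      ≤ M := by
    have hsub : Set.Ioo r δ ⊆ Set.Ioo (0:ℝ) δ := Set.Ioo_subset_Ioo (le_of_lt hrpos) le_rfl
    have hclaim' : ∀ᵐ s : ℝ ∂(volume.restrict (Set.Ioo r δ)),
        ENNReal.ofReal (ε^2/(64*Real.pi) * s⁻¹) ≤ liminf (fun j => Fj j s) atTop :=
      ae_restrict_of_ae_restrict_of_subset hsub claim_main
    calc (∫⁻ s in Set.Ioo r δ, ENNReal.ofReal (ε^2/(64*Real.pi) * s⁻¹))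
        ≤ ∫⁻ s in Set.Ioo r δ, liminf (fun j => Fj j s) atTop := lintegral_mono_ae hclaim'
      _ ≤ liminf (fun j => ∫⁻ s in Set.Ioo r δ, Fj j s) atTop :=
          lintegral_liminf_le (fun j => hFjmeas j)
      _ ≤ liminf (fun _ : ℕ => M) atTop := by
          apply liminf_le_liminf ?_ ?_ ?_
          case _ =>
            filter_upwards [hAbound] with j hj
            calc (∫⁻ s in Set.Ioo r δ, Fj j s)
                ≤ ∫⁻ s in Set.Ioo (0:ℝ) δ, Fj j s :=
                  lintegral_mono' (Measure.restrict_mono hsub le_rfl) le_rfl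
              _ ≤ A j := hupper j
              _ ≤ M := hj
          case _ => isBoundedDefault
          case _ => isBoundedDefault
      _ = M := liminf_const M
  -- final contradiction
  have hval : ε^2/(64*Real.pi) * Real.log (δ/r) = M.toReal + 1 := by
    rw [hlogeq, hYdef]
    field_simp
  have hfinal : ENNReal.ofReal (M.toReal + 1) ≤ M := by
    rw [← hval]
    exact le_trans hIeq hchain
  have hlt : M < ENNReal.ofReal (M.toReal + 1) := by
    calc M = ENNReal.ofReal M.toReal := (ENNReal.ofReal_toReal hMne).symm
      _ < ENNReal.ofReal (M.toReal + 1) := by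
          refine (ENNReal.ofReal_lt_ofReal_iff ?_).mpr (lt_add_one _)
          positivity
  exact absurd hfinal (not_le.mpr hlt)

end
end

section
/- Suppose h ∈ C(𝔻, ℂ) ∩ W^{1,2}(𝔻, ℂ) and h − f ∈ W^{1,2}_0(𝔻, ℂ) for some f ∈ C(closure(𝔻), ℂ). Let A ⊂ ℂ be a set with closure(A) ∩ f(𝕊¹) = ∅, and let C be a connected component of h⁻¹(A). Then closure(C) ⊂ 𝔻. -/
open MeasureTheory Metric Set Filter Topology

noncomputable section

open scoped Real ENNReal NNReal
open Complex
open scoped Interval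

lemma aux_clm_norm_bound (L : ℂ →L[ℝ] ℂ) (z : ℂ) : ‖L z‖ ≤ ‖z‖ * (‖L 1‖ + ‖L I‖) := by
  have hz : z = z.re • (1 : ℂ) + z.im • I := by
    simp [Complex.real_smul, mul_one, Complex.re_add_im]
  calc ‖L z‖ = ‖z.re • L 1 + z.im • L I‖ := by
        conv_lhs => rw [hz]
        rw [map_add, ContinuousLinearMap.map_smul, ContinuousLinearMap.map_smul]
    _ ≤ ‖z.re • L 1‖ + ‖z.im • L I‖ := norm_add_le _ _
    _ = |z.re| * ‖L 1‖ + |z.im| * ‖L I‖ := by rw [norm_smul, norm_smul]; simp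
    _ ≤ ‖z‖ * ‖L 1‖ + ‖z‖ * ‖L I‖ := by
        gcongr
        · exact Complex.abs_re_le_norm z
        · exact Complex.abs_im_le_norm z
    _ = ‖z‖ * (‖L 1‖ + ‖L I‖) := by ring

lemma aux_sq_add_le (a b : ℝ≥0∞) : (a + b) ^ 2 ≤ 4 * (a ^ 2 + b ^ 2) := by
  rcases le_total a b with h | h
  · calc (a + b) ^ 2 ≤ (b + b) ^ 2 := by gcongr
      _ = 4 * b ^ 2 := by ring
      _ ≤ 4 * (a ^ 2 + b ^ 2) := by gcongr; exact le_add_self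
  · calc (a + b) ^ 2 ≤ (a + a) ^ 2 := by gcongr
      _ = 4 * a ^ 2 := by ring
      _ ≤ 4 * (a ^ 2 + b ^ 2) := by gcongr; exact self_le_add_right _ _

lemma aux_polar_symm_eq (q : ℝ × ℝ) :
    Complex.polarCoord.symm q = (q.1 : ℂ) * Complex.exp (q.2 * I) := by
  rw [Complex.polarCoord_symm_apply, Complex.exp_mul_I]
  norm_num [Complex.ofReal_cos, Complex.ofReal_sin]



lemma aux_T_meas (p : ℂ) : Continuous (fun q : ℝ × ℝ => p + Complex.polarCoord.symm q) := by
  have : (fun q : ℝ × ℝ => p + Complex.polarCoord.symm q)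
      = fun q : ℝ × ℝ => p + (q.1 : ℂ) * (Real.cos q.2 + Real.sin q.2 * I) := by
    funext q; rw [Complex.polarCoord_symm_apply]
  rw [this]
  fun_prop

lemma aux_polar_lintegral_le (p : ℂ) (g : ℂ → ℝ≥0∞) (hg : Measurable g) (r₀ : ℝ) :
    ∫⁻ q in Ioo (0:ℝ) r₀ ×ˢ Ioo (-π) π,
      ENNReal.ofReal q.1 * g (p + Complex.polarCoord.symm q) ≤ ∫⁻ z, g z := by
  set R : Set (ℝ × ℝ) := Ioo (0:ℝ) r₀ ×ˢ Ioo (-π) π with hRdef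
  have hRmeas : MeasurableSet R := measurableSet_Ioo.prod measurableSet_Ioo
  have hRsub : R ⊆ polarCoord.target := by
    rintro ⟨s, θ⟩ ⟨hs, hθ⟩
    exact ⟨hs.1, hθ⟩
  set G : ℝ × ℝ → ℝ≥0∞ := fun y => g (p + Complex.measurableEquivRealProd.symm y) with hGdef
  set B : ℝ × ℝ → ℝ × ℝ →L[ℝ] ℝ × ℝ := fun q =>
    LinearMap.toContinuousLinearMap (Matrix.toLin (Module.Basis.finTwoProd ℝ) (Module.Basis.finTwoProd ℝ)
      !![Real.cos q.2, -q.1 * Real.sin q.2; Real.sin q.2, q.1 * Real.cos q.2]) with hBdef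
  have hB : ∀ q ∈ R, HasFDerivWithinAt polarCoord.symm (B q) R q := fun q _ =>
    (hasFDerivAt_polarCoord_symm q).hasFDerivWithinAt
  have hBdet : ∀ q, (B q).det = q.1 := by
    intro q
    conv_rhs => rw [← one_mul q.1, ← Real.cos_sq_add_sin_sq q.2]
    simp only [hBdef, neg_mul, LinearMap.det_toContinuousLinearMap, LinearMap.det_toLin,
      Matrix.det_fin_two_of, sub_neg_eq_add]
    ring
  have hinj : InjOn polarCoord.symm R := by
    refine polarCoord.symm.injOn.mono ?_
    rw [OpenPartialHomeomorph.symm_source]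
    exact hRsub
  have key := lintegral_image_eq_lintegral_abs_det_fderiv_mul volume hRmeas hB hinj G
  have hGchain : ∀ q : ℝ × ℝ, G (polarCoord.symm q) = g (p + Complex.polarCoord.symm q) := by
    intro q
    have : Complex.measurableEquivRealProd.symm (polarCoord.symm q)
        = Complex.polarCoord.symm q := by
      rw [Complex.polarCoord_symm_apply]
      apply Complex.ext <;>
        simp [polarCoord, Complex.measurableEquivRealProd_symm_apply, Complex.cos_ofReal_re,
          Complex.sin_ofReal_re, Complex.cos_ofReal_im, Complex.sin_ofReal_im] <;> ring
    rw [hGdef]; simp only [this]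
  calc ∫⁻ q in R, ENNReal.ofReal q.1 * g (p + Complex.polarCoord.symm q)
      = ∫⁻ q in R, ENNReal.ofReal |(B q).det| * G (polarCoord.symm q) := by
        refine setLIntegral_congr_fun hRmeas (fun q hq => ?_)
        rw [hGchain, hBdet, abs_of_pos hq.1.1]
    _ = ∫⁻ y in polarCoord.symm '' R, G y := (key).symm
    _ ≤ ∫⁻ y, G y := setLIntegral_le_lintegral _ _
    _ = ∫⁻ z, g z := by
        have hmp : MeasurePreserving (fun y : ℝ × ℝ => p + Complex.measurableEquivRealProd.symm y)
            volume volume :=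
          (measurePreserving_add_left volume p).comp
            Complex.volume_preserving_equiv_real_prod.symm
        exact hmp.lintegral_comp hg

lemma aux_polar_ae_slices (p : ℂ) (N : Set ℂ) (hN : MeasurableSet N) (hN0 : volume N = 0)
    (r₀ : ℝ) :
    ∀ᵐ s ∂(volume.restrict (Ioo (0:ℝ) r₀)), ∀ᵐ θ ∂(volume.restrict (Ioo (-π) π)),
      p + Complex.polarCoord.symm (s, θ) ∉ N := by
  set g : ℂ → ℝ≥0∞ := N.indicator fun _ => 1 with hgdef
  have hg : Measurable g := measurable_one.indicator hN
  have key := aux_polar_lintegral_le p g hg r₀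
  rw [hgdef, lintegral_indicator hN, setLIntegral_one, hN0] at key
  have h0 : ∫⁻ q in Ioo (0:ℝ) r₀ ×ˢ Ioo (-π) π,
      ENNReal.ofReal q.1 * g (p + Complex.polarCoord.symm q) = 0 :=
    le_antisymm key zero_le
  have hmeas : Measurable fun q : ℝ × ℝ =>
      ENNReal.ofReal q.1 * g (p + Complex.polarCoord.symm q) :=
    (ENNReal.measurable_ofReal.comp measurable_fst).mul (hg.comp (aux_T_meas p).measurable)
  rw [lintegral_eq_zero_iff hmeas] at h0
  rw [show (volume : Measure (ℝ × ℝ)) = (volume : Measure ℝ).prod volume from rfl,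
    ← Measure.prod_restrict] at h0
  have h1 := Measure.ae_ae_of_ae_prod h0
  filter_upwards [h1, ae_restrict_mem measurableSet_Ioo] with s hs hsmem
  filter_upwards [hs] with θ hθ
  intro hmem
  simp only [Pi.zero_apply] at hθ
  rw [hgdef, Set.indicator_of_mem hmem, mul_one] at hθ
  have := ENNReal.ofReal_eq_zero.mp hθ
  linarith [hsmem.1]


lemma aux_T_eq_circleMap (p : ℂ) (s θ : ℝ) :
    p + Complex.polarCoord.symm (s, θ) = circleMap p s θ := by
  rw [aux_polar_symm_eq]; rfl

lemma aux_circle_bound (w : ℂ → ℂ) (hw : ContDiff ℝ (⊤ : ℕ∞) w)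
    (hsupp : tsupport w ⊆ Metric.ball (0 : ℂ) 1)
    (p : ℂ) (hp : ‖p‖ = 1) (s : ℝ) (hs : 0 < s) (θs : ℝ) (hθs : θs ∈ Ioo (-π) π) :
    (‖w (circleMap p s θs)‖₊ : ℝ≥0∞) ^ 2 ≤
      ENNReal.ofReal (8 * π * s ^ 2) *
        ∫⁻ θ in Ioo (-π) π,
          ((‖fderiv ℝ w (circleMap p s θ) 1‖₊ : ℝ≥0∞) ^ 2 +
            (‖fderiv ℝ w (circleMap p s θ) Complex.I‖₊ : ℝ≥0∞) ^ 2) := by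
  set a : ℝ → ℝ≥0∞ := fun θ => (‖fderiv ℝ w (circleMap p s θ) 1‖₊ : ℝ≥0∞) with ha
  set b : ℝ → ℝ≥0∞ := fun θ => (‖fderiv ℝ w (circleMap p s θ) Complex.I‖₊ : ℝ≥0∞) with hb
  set ρ : ℝ≥0∞ := ∫⁻ θ in Ioo (-π) π, (a θ ^ 2 + b θ ^ 2) with hρ
  set D : ℝ → ℂ := fun θ => fderiv ℝ w (circleMap p s θ) (circleMap 0 s θ * I) with hD
  -- derivative of w along the circle
  have hder : ∀ θ : ℝ, HasDerivAt (fun t => w (circleMap p s t)) (D θ) θ := fun θ =>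
    ((hw.differentiable (by simp) (circleMap p s θ)).hasFDerivAt).comp_hasDerivAt θ
      (hasDerivAt_circleMap p s θ)
  have hfc : Continuous (fderiv ℝ w) := hw.continuous_fderiv (by simp)
  have hDc : Continuous D :=
    (hfc.comp (continuous_circleMap p s)).clm_apply
      ((continuous_circleMap 0 s).mul continuous_const)
  -- the circle exits the support
  set θ₀ : ℝ := p.arg with hθ₀def
  have hθ₀ : θ₀ ∈ Ioc (-π) π := ⟨Complex.neg_pi_lt_arg p, Complex.arg_le_pi p⟩
  have hzero : w (circleMap p s θ₀) = 0 := by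
    apply image_eq_zero_of_notMem_tsupport
    intro hmem
    have h1 : circleMap p s θ₀ = (1 + s) * p := by
      have : Complex.exp (θ₀ * I) = p := by
        have := Complex.norm_mul_exp_arg_mul_I p
        rwa [hp, Complex.ofReal_one,
          one_mul] at this
      simp only [circleMap, this]
      ring
    have h2 := hsupp hmem
    rw [h1, mem_ball, dist_zero_right, norm_mul] at h2
    have : ‖(1 + s : ℂ)‖ = 1 + s := by
      rw [show ((1:ℂ) + s) = ((1 + s : ℝ) : ℂ) from by push_cast; ring, Complex.norm_real, Real.norm_eq_abs]
      rw [abs_of_pos (by linarith)]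
    rw [this, hp, mul_one] at h2
    linarith
  -- fundamental theorem of calculus along the circle
  have hftc : ∫ t in θ₀..θs, D t = w (circleMap p s θs) - w (circleMap p s θ₀) :=
    intervalIntegral.integral_eq_sub_of_hasDerivAt (fun t _ => hder t)
      (hDc.intervalIntegrable θ₀ θs)
  have hnorm1 : ‖w (circleMap p s θs)‖ ≤ ∫ t in Ι θ₀ θs, ‖D t‖ := by
    calc ‖w (circleMap p s θs)‖ = ‖∫ t in θ₀..θs, D t‖ := by rw [hftc, hzero, sub_zero]
      _ ≤ ∫ t in Ι θ₀ θs, ‖D t‖ := intervalIntegral.norm_integral_le_integral_norm_uIoc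
  -- pass to lintegral
  have hIsub : Ι θ₀ θs ⊆ Ioc (-π) π := by
    rw [Set.uIoc]
    exact Set.Ioc_subset_Ioc (le_min hθ₀.1.le hθs.1.le) (max_le hθ₀.2 hθs.2.le)
  have hint : IntegrableOn (fun t => ‖D t‖) (Ι θ₀ θs) volume :=
    intervalIntegrable_iff.mp (hDc.norm.intervalIntegrable θ₀ θs)
  have hofReal : ENNReal.ofReal (∫ t in Ι θ₀ θs, ‖D t‖) = ∫⁻ t in Ι θ₀ θs, ENNReal.ofReal ‖D t‖ :=
    ofReal_integral_eq_lintegral_ofReal hint (ae_of_all _ fun t => norm_nonneg _)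
  have hchain1 : (‖w (circleMap p s θs)‖₊ : ℝ≥0∞) ≤
      ∫⁻ θ in Ioo (-π) π, ENNReal.ofReal ‖D θ‖ := by
    rw [← enorm_eq_nnnorm, ← ofReal_norm]
    calc ENNReal.ofReal ‖w (circleMap p s θs)‖
        ≤ ENNReal.ofReal (∫ t in Ι θ₀ θs, ‖D t‖) := ENNReal.ofReal_le_ofReal hnorm1
      _ = ∫⁻ t in Ι θ₀ θs, ENNReal.ofReal ‖D t‖ := hofReal
      _ ≤ ∫⁻ t in Ioc (-π) π, ENNReal.ofReal ‖D t‖ := lintegral_mono_set hIsub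
      _ = ∫⁻ t in Ioo (-π) π, ENNReal.ofReal ‖D t‖ := setLIntegral_congr Ioo_ae_eq_Ioc.symm
  have hpointwise : ∀ θ, ENNReal.ofReal ‖D θ‖ ≤ ENNReal.ofReal s * (a θ + b θ) := by
    intro θ
    have h1 : ‖D θ‖ ≤ s * (‖fderiv ℝ w (circleMap p s θ) 1‖ +
        ‖fderiv ℝ w (circleMap p s θ) I‖) := by
      have h2 := aux_clm_norm_bound (fderiv ℝ w (circleMap p s θ)) (circleMap 0 s θ * I)
      rwa [norm_mul, norm_circleMap_zero,
        Complex.norm_I, mul_one, abs_of_pos hs] at h2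
    calc ENNReal.ofReal ‖D θ‖
        ≤ ENNReal.ofReal (s * (‖fderiv ℝ w (circleMap p s θ) 1‖ +
            ‖fderiv ℝ w (circleMap p s θ) I‖)) := ENNReal.ofReal_le_ofReal h1
      _ = ENNReal.ofReal s * (a θ + b θ) := by
          rw [ENNReal.ofReal_mul hs.le, ENNReal.ofReal_add (norm_nonneg _) (norm_nonneg _),
            ha, hb, ofReal_norm, ofReal_norm]
          rfl
  have hameas : Measurable a :=
    (((hfc.comp (continuous_circleMap p s)).clm_apply continuous_const).measurable).nnnorm.coe_nnreal_ennreal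
  have hbmeas : Measurable b :=
    (((hfc.comp (continuous_circleMap p s)).clm_apply continuous_const).measurable).nnnorm.coe_nnreal_ennreal
  have hchain2 : ∫⁻ θ in Ioo (-π) π, ENNReal.ofReal ‖D θ‖ ≤
      ENNReal.ofReal s * ∫⁻ θ in Ioo (-π) π, (a θ + b θ) := by
    calc ∫⁻ θ in Ioo (-π) π, ENNReal.ofReal ‖D θ‖
        ≤ ∫⁻ θ in Ioo (-π) π, ENNReal.ofReal s * (a θ + b θ) :=
          lintegral_mono fun θ => hpointwise θ
      _ = ENNReal.ofReal s * ∫⁻ θ in Ioo (-π) π, (a θ + b θ) :=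
          lintegral_const_mul' _ _ ENNReal.ofReal_ne_top
  have hconj : (2:ℝ).HolderConjugate 2 := Real.HolderConjugate.two_two
  have hholder := ENNReal.lintegral_mul_le_Lp_mul_Lq (volume.restrict (Ioo (-π) π)) hconj
    ((hameas.add hbmeas).aemeasurable) (aemeasurable_const (b := (1:ℝ≥0∞)))
  simp only [mul_one, Pi.mul_apply, Pi.one_apply, ENNReal.one_rpow] at hholder
  have hvol : ∫⁻ _ in Ioo (-π) π, (1:ℝ≥0∞) = ENNReal.ofReal (2*π) := by
    rw [setLIntegral_one, Real.volume_Ioo]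
    congr 1; ring
  rw [hvol] at hholder
  have hrpow2 : ∀ x : ℝ≥0∞, x ^ (2:ℝ) = x ^ (2:ℕ) := fun x => by
    rw [show (2:ℝ) = ((2:ℕ):ℝ) by norm_num, ENNReal.rpow_natCast]
  have hsq : ∫⁻ θ in Ioo (-π) π, (a θ + b θ) ^ (2:ℝ) ≤ 4 * ρ := by
    calc ∫⁻ θ in Ioo (-π) π, (a θ + b θ) ^ (2:ℝ)
        = ∫⁻ θ in Ioo (-π) π, (a θ + b θ) ^ (2:ℕ) := by
          refine lintegral_congr fun θ => ?_
          exact hrpow2 _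
      _ ≤ ∫⁻ θ in Ioo (-π) π, 4 * (a θ ^ 2 + b θ ^ 2) :=
          lintegral_mono fun θ => aux_sq_add_le (a θ) (b θ)
      _ = 4 * ρ := lintegral_const_mul' _ _ (by norm_num)
  have hsqrt : ∀ x : ℝ≥0∞, (x ^ (1/2:ℝ)) ^ (2:ℕ) = x := fun x => by
    rw [← ENNReal.rpow_natCast (x ^ (1/2:ℝ)) 2, ← ENNReal.rpow_mul]
    norm_num
  -- put everything together
  have hmain : (‖w (circleMap p s θs)‖₊ : ℝ≥0∞) ≤
      ENNReal.ofReal s * ((∫⁻ θ in Ioo (-π) π, (a θ + b θ) ^ (2:ℝ)) ^ (1/2:ℝ) *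
        ENNReal.ofReal (2*π) ^ (1/2:ℝ)) :=
    hchain1.trans (hchain2.trans (by gcongr; simpa [Pi.add_apply] using hholder))
  calc (‖w (circleMap p s θs)‖₊ : ℝ≥0∞) ^ 2
      ≤ (ENNReal.ofReal s * ((∫⁻ θ in Ioo (-π) π, (a θ + b θ) ^ (2:ℝ)) ^ (1/2:ℝ) *
          ENNReal.ofReal (2*π) ^ (1/2:ℝ))) ^ 2 := by gcongr
    _ = ENNReal.ofReal s ^ 2 * (((∫⁻ θ in Ioo (-π) π, (a θ + b θ) ^ (2:ℝ)) ^ (1/2:ℝ)) ^ (2:ℕ) *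
          (ENNReal.ofReal (2*π) ^ (1/2:ℝ)) ^ (2:ℕ)) := by ring
    _ = ENNReal.ofReal s ^ 2 * ((∫⁻ θ in Ioo (-π) π, (a θ + b θ) ^ (2:ℝ)) *
          ENNReal.ofReal (2*π)) := by rw [hsqrt, hsqrt]
    _ ≤ ENNReal.ofReal s ^ 2 * ((4 * ρ) * ENNReal.ofReal (2*π)) := by gcongr
    _ = (ENNReal.ofReal s ^ 2 * ENNReal.ofReal (2*π) * 4) * ρ := by ring
    _ = ENNReal.ofReal (8 * π * s ^ 2) * ρ := by
        rw [← ENNReal.ofReal_pow hs.le, ← ENNReal.ofReal_mul (by positivity),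
          show (4:ℝ≥0∞) = ENNReal.ofReal 4 by simp,
          ← ENNReal.ofReal_mul (by positivity)]
        congr 1
        ring




lemma aux_lintegral_inv_top (r₀ : ℝ) (hr : 0 < r₀) (c : ℝ) (hc : 0 < c) :
    ∫⁻ s in Ioo (0:ℝ) r₀, ENNReal.ofReal (c / s) = ⊤ := by
  by_contra hfin
  have hne : ∫⁻ s in Ioo (0:ℝ) r₀, ENNReal.ofReal (c / s) < ⊤ := lt_top_iff_ne_top.mpr hfin
  have hmeas : Measurable fun s : ℝ => c / s := measurable_const.div measurable_id
  have hint : IntegrableOn (fun s : ℝ => c / s) (Ioo 0 r₀) volume := by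
    refine ⟨hmeas.aestronglyMeasurable, ?_⟩
    rw [hasFiniteIntegral_iff_norm]
    have : ∀ᵐ s ∂(volume.restrict (Ioo (0:ℝ) r₀)),
        ENNReal.ofReal ‖c / s‖ = ENNReal.ofReal (c / s) := by
      filter_upwards [ae_restrict_mem measurableSet_Ioo] with s hs
      rw [Real.norm_eq_abs, abs_of_pos (div_pos hc hs.1)]
    rwa [lintegral_congr_ae this]
  have hint2 : IntegrableOn (fun s : ℝ => s ^ (-1:ℝ)) (Ioo 0 r₀) volume := by
    have h3 : IntegrableOn (fun s : ℝ => c⁻¹ * (c / s)) (Ioo 0 r₀) volume :=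
      hint.const_mul _
    refine h3.congr_fun (fun s hs => ?_) measurableSet_Ioo
    rw [Real.rpow_neg_one]
    field_simp
  rw [intervalIntegral.integrableOn_Ioo_rpow_iff hr] at hint2
  linarith

lemma aux_fderiv_zero (w : ℂ → ℂ) (hsupp : tsupport w ⊆ Metric.ball (0:ℂ) 1) (z : ℂ)
    (hz : z ∉ Metric.ball (0:ℂ) 1) : fderiv ℝ w z = 0 := by
  have hzc : z ∈ (tsupport w)ᶜ := fun hmem => hz (hsupp hmem)
  have hev : w =ᶠ[𝓝 z] (fun _ => (0:ℂ)) :=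
    Filter.eventually_of_mem ((isClosed_tsupport w).isOpen_compl.mem_nhds hzc)
      fun y hy => image_eq_zero_of_notMem_tsupport hy
  rw [hev.fderiv_eq, fderiv_fun_const]
  rfl

lemma aux_lintegral_sq_eq (g : ℂ → ℂ) (μ : Measure ℂ) :
    ∫⁻ z, (‖g z‖₊ : ℝ≥0∞) ^ 2 ∂μ = eLpNorm g 2 μ ^ 2 := by
  rw [eLpNorm_eq_lintegral_rpow_enorm_toReal (two_ne_zero) (ENNReal.ofNat_ne_top)]
  simp only [enorm_eq_nnnorm]
  have h2 : (2:ℝ≥0∞).toReal = 2 := by simp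
  rw [h2]
  have hrpow2 : ∀ x : ℝ≥0∞, x ^ (2:ℝ) = x ^ (2:ℕ) := fun x => by
    rw [show (2:ℝ) = ((2:ℕ):ℝ) by norm_num, ENNReal.rpow_natCast]
  have hsqrt : ∀ x : ℝ≥0∞, (x ^ (1/2:ℝ)) ^ (2:ℕ) = x := fun x => by
    rw [← ENNReal.rpow_natCast (x ^ (1/2:ℝ)) 2, ← ENNReal.rpow_mul]
    norm_num
  rw [show (1:ℝ)/2 = 1/2 from rfl]
  conv_rhs => rw [show ((∫⁻ z, (‖g z‖₊ : ℝ≥0∞) ^ (2:ℝ) ∂μ) ^ (1/(2:ℝ))) ^ (2:ℕ)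
    = ∫⁻ z, (‖g z‖₊ : ℝ≥0∞) ^ (2:ℝ) ∂μ from hsqrt _]
  exact lintegral_congr fun z => (hrpow2 _).symm

lemma aux_exists_angle (V : Set ℂ) (hV : IsOpen V) (p z : ℂ) (s : ℝ) (hs : 0 < s)
    (hz : z ∈ V) (hd : dist z p = s) : ∃ θ ∈ Ioo (-π) π, circleMap p s θ ∈ V := by
  set θz := (z - p).arg with hθzdef
  have habs : ‖z - p‖ = s := by rw [← Complex.dist_eq]; exact hd
  have hzx : circleMap p s θz = z := by
    have h1 := Complex.norm_mul_exp_arg_mul_I (z - p)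
    rw [habs] at h1
    simp only [circleMap, hθzdef, h1]
    ring
  have hmem : (fun θ => circleMap p s θ) ⁻¹' V ∈ 𝓝 θz :=
    (continuous_circleMap p s).continuousAt.preimage_mem_nhds (hV.mem_nhds (hzx ▸ hz))
  obtain ⟨ε, hε, hball⟩ := Metric.mem_nhds_iff.mp hmem
  have hθz : θz ∈ Ioc (-π) π := ⟨Complex.neg_pi_lt_arg _, Complex.arg_le_pi _⟩
  have hm : 0 < min ε (θz + π) := lt_min hε (by linarith [hθz.1])
  have hmle1 : min ε (θz + π) ≤ ε := min_le_left _ _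
  have hmle2 : min ε (θz + π) ≤ θz + π := min_le_right _ _
  refine ⟨θz - min ε (θz + π) / 2, ⟨by linarith [hθz.1], by linarith [hθz.2]⟩, ?_⟩
  apply hball
  simp only [mem_ball, Real.dist_eq]
  rw [show θz - min ε (θz + π) / 2 - θz = -(min ε (θz + π) / 2) by ring, abs_neg,
    abs_of_pos (by linarith)]
  linarith


/-- If `h ∈ C(𝔻, ℂ) ∩ W^{1,2}(𝔻, ℂ)`, `h - f ∈ W^{1,2}_0(𝔻, ℂ)` for a continuous
`f : closure 𝔻 → ℂ`, and `closure A ∩ f(𝕊¹) = ∅`, then every connected component of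
`h⁻¹(A)` has closure contained in `𝔻`. -/
theorem component_closure_in_disk
    (h f : ℂ → ℂ)
    (hC : ContinuousOn h unitDisk) (hW : MemW12 unitDisk h)
    (hfC : ContinuousOn f (closure unitDisk))
    (hW0 : MemW120 unitDisk (fun z => h z - f z))
    (A : Set ℂ) (hA : closure A ∩ f '' unitCircle = ∅)
    (x : ℂ) (hx : x ∈ unitDisk ∩ h ⁻¹' A) :
    closure (connectedComponentIn (unitDisk ∩ h ⁻¹' A) x) ⊆ unitDisk := by
  classical
  have hDball : unitDisk = Metric.ball (0:ℂ) 1 := rfl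
  have hDopen : IsOpen unitDisk := isOpen_ball
  have hDmeas : MeasurableSet unitDisk := measurableSet_ball
  set u : ℂ → ℂ := fun z => h z - f z with hudef
  intro p hpclos
  by_contra hpnot
  set S : Set ℂ := unitDisk ∩ h ⁻¹' A with hSdef
  have hxS : x ∈ S := hx
  have hCsub : connectedComponentIn S x ⊆ S := connectedComponentIn_subset S x
  have hCconn : IsConnected (connectedComponentIn S x) :=
    isConnected_connectedComponentIn_iff.mpr hxS
  have hxC : x ∈ connectedComponentIn S x := mem_connectedComponentIn hxS
  -- `p` is on the unit circle
  have hpclos𝔻 : p ∈ closure unitDisk :=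
    closure_mono (hCsub.trans inter_subset_left) hpclos
  have hp1 : ‖p‖ = 1 := by
    have h1 : p ∈ closedBall (0:ℂ) 1 := by
      rwa [hDball, closure_ball (0:ℂ) one_ne_zero] at hpclos𝔻
    have h2 : ‖p‖ ≤ 1 := by rwa [mem_closedBall_zero_iff] at h1
    have h3 : ¬ ‖p‖ < 1 := fun hlt => hpnot (by rwa [hDball, mem_ball_zero_iff])
    linarith [lt_or_ge ‖p‖ 1, h2, not_lt.mp h3]
  -- the distance δ from f p to the closure of A
  have hfp_img : f p ∈ f '' unitCircle := ⟨p, by simp [unitCircle, mem_sphere_zero_iff_norm, hp1], rfl⟩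
  have hfp_not : f p ∉ closure A := by
    intro hmem
    have : f p ∈ closure A ∩ f '' unitCircle := ⟨hmem, hfp_img⟩
    rw [hA] at this
    exact this
  have hAne : (closure A).Nonempty := ⟨h x, subset_closure hx.2⟩
  set δ : ℝ := infDist (f p) (closure A) with hδdef
  have hδpos : 0 < δ := (isClosed_closure.notMem_iff_infDist_pos hAne).mp hfp_not
  -- continuity of u on the disk
  have huc : ContinuousOn u unitDisk := hC.sub (hfC.mono subset_closure)
  -- modulus of continuity of f at p
  obtain ⟨r₁, hr₁pos, hr₁⟩ : ∃ r₁ > 0, ∀ z ∈ closure unitDisk,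
      dist z p < r₁ → dist (f z) (f p) < δ/2 := by
    have hcw := hfC p hpclos𝔻
    rw [Metric.continuousWithinAt_iff] at hcw
    obtain ⟨r₁, hr₁pos, H⟩ := hcw (δ/2) (by positivity)
    exact ⟨r₁, hr₁pos, fun z hz hd => H hz hd⟩
  have hdxp : 0 < dist x p := dist_pos.mpr (fun hxp => hpnot (hxp ▸ hx.1))
  set r₀ : ℝ := min r₁ (dist x p) with hr₀def
  have hr₀pos : 0 < r₀ := lt_min hr₁pos hdxp
  -- the open set V where ‖u‖ > δ/4
  set V : Set ℂ := unitDisk ∩ u ⁻¹' {w : ℂ | δ/4 < ‖w‖} with hVdef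
  have hVopen : IsOpen V :=
    huc.isOpen_inter_preimage hDopen (isOpen_lt continuous_const continuous_norm)
  have hVsub : V ⊆ unitDisk := inter_subset_left
  -- every circle of radius s < r₀ about p meets V
  have hcircle : ∀ s ∈ Ioo (0:ℝ) r₀, ∃ z ∈ V, dist z p = s := by
    intro s hs
    have hCmeets : ∃ z ∈ connectedComponentIn S x, dist z p = s := by
      by_contra hnone
      push_neg at hnone
      have hsub2 : connectedComponentIn S x ⊆ {z | dist z p < s} ∪ {z | s < dist z p} := by
        intro z hz
        rcases lt_trichotomy (dist z p) s with hlt | heq | hgt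
        · exact Or.inl hlt
        · exact absurd heq (hnone z hz)
        · exact Or.inr hgt
      have h1 : (connectedComponentIn S x ∩ {z | dist z p < s}).Nonempty := by
        obtain ⟨z, hz1, hz2⟩ := Metric.mem_closure_iff.mp hpclos s hs.1
        exact ⟨z, hz1, by simpa [dist_comm] using hz2⟩
      have h2 : (connectedComponentIn S x ∩ {z | s < dist z p}).Nonempty :=
        ⟨x, hxC, lt_of_lt_of_le hs.2 (min_le_right _ _)⟩
      obtain ⟨z, hzC, hz1, hz2⟩ := hCconn.isPreconnected _ _
        (isOpen_lt (continuous_id.dist continuous_const) continuous_const)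
        (isOpen_lt continuous_const (continuous_id.dist continuous_const))
        hsub2 h1 h2
      simp only [mem_setOf_eq] at hz1 hz2
      linarith
    obtain ⟨z, hzC, hzs⟩ := hCmeets
    refine ⟨z, ⟨(hCsub hzC).1, ?_⟩, hzs⟩
    have hz𝔻 : z ∈ unitDisk := (hCsub hzC).1
    have hzA : h z ∈ A := (hCsub hzC).2
    have hfz : dist (f z) (f p) < δ/2 := hr₁ z (subset_closure hz𝔻)
      (by rw [hzs]; exact lt_of_lt_of_le hs.2 (min_le_left _ _))
    have hδle : δ ≤ dist (f p) (h z) := infDist_le_dist_of_mem (subset_closure hzA)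
    have htri : dist (f p) (h z) ≤ dist (f p) (f z) + dist (f z) (h z) := dist_triangle _ _ _
    have h5 : δ/2 < dist (f z) (h z) := by
      rw [dist_comm (f p) (f z)] at htri
      linarith
    show δ/4 < ‖u z‖
    have : ‖u z‖ = dist (h z) (f z) := by rw [hudef, dist_eq_norm]
    rw [this, dist_comm]
    linarith
  -- the Sobolev data
  obtain ⟨gx, gy, hgx, hgy, humem, hgxmem, hgymem, φ, hφprop, hφ0, hφ1, hφ2⟩ := hW0
  set μD : Measure ℂ := volume.restrict unitDisk with hμDdef
  -- a.e. convergent subsequence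
  have humeas : AEStronglyMeasurable u μD := huc.aestronglyMeasurable hDmeas
  have hφmeas : ∀ n, AEStronglyMeasurable (φ n) μD := fun n =>
    ((hφprop n).1.continuous).aestronglyMeasurable
  have htim : TendstoInMeasure μD φ atTop u := by
    refine tendstoInMeasure_of_tendsto_eLpNorm (p := 2) (by norm_num) hφmeas humeas ?_
    have hkey : (fun n => eLpNorm (φ n - u) 2 μD)
        = fun n => eLpNorm (fun z => u z - φ n z) 2 μD := by
      funext n
      rw [← neg_sub u (φ n), eLpNorm_neg]
      rfl
    rw [hkey]
    exact hφ0
  obtain ⟨ns, hns_mono, hns_ae⟩ := htim.exists_seq_tendsto_ae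
  -- the exceptional null set
  set N : Set ℂ := {z : ℂ | ¬ (z ∈ unitDisk → Tendsto (fun i => φ (ns i) z) atTop (𝓝 (u z)))}
    with hNdef
  have hNnull : volume N = 0 := by
    have h1 : ∀ᵐ z ∂(volume : Measure ℂ), z ∈ unitDisk →
        Tendsto (fun i => φ (ns i) z) atTop (𝓝 (u z)) := (ae_restrict_iff' hDmeas).mp hns_ae
    exact ae_iff.mp h1
  obtain ⟨N', hNsub, hN'meas, hN'null⟩ := exists_measurable_superset_of_null hNnull
  -- the gradient-square integrand
  set Q : ℕ → ℂ → ℝ≥0∞ := fun k z =>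
    (‖fderiv ℝ (φ (ns k)) z 1‖₊ : ℝ≥0∞) ^ 2 + (‖fderiv ℝ (φ (ns k)) z Complex.I‖₊ : ℝ≥0∞) ^ 2
    with hQdef
  have hfc : ∀ k, Continuous (fderiv ℝ (φ (ns k))) := fun k =>
    ((hφprop (ns k)).1).continuous_fderiv (by simp)
  have hQmeas : ∀ k, Measurable (Q k) := fun k =>
    ((((hfc k).clm_apply continuous_const).measurable).nnnorm.coe_nnreal_ennreal.pow_const 2).add
      ((((hfc k).clm_apply continuous_const).measurable).nnnorm.coe_nnreal_ennreal.pow_const 2)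
  -- integrals over circles
  set ρ : ℕ → ℝ → ℝ≥0∞ := fun k s => ∫⁻ θ in Ioo (-π) π, Q k (circleMap p s θ) with hρdef
  set G : ℕ → ℝ → ℝ≥0∞ := fun k s => ENNReal.ofReal s * ρ k s with hGdef
  have hcm : Continuous (fun q : ℝ × ℝ => circleMap p q.1 q.2) := by
    have heq : (fun q : ℝ × ℝ => circleMap p q.1 q.2)
        = fun q : ℝ × ℝ => p + (q.1 : ℂ) * Complex.exp ((q.2 : ℂ) * Complex.I) := rfl
    rw [heq]; fun_prop
  have hρmeas : ∀ k, Measurable (ρ k) := fun k =>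
    Measurable.lintegral_prod_right' ((hQmeas k).comp hcm.measurable)
  have hGmeas : ∀ k, Measurable (G k) := fun k =>
    (ENNReal.measurable_ofReal.comp measurable_id).mul (hρmeas k)
  -- bound on the Dirichlet energies
  set M : ℝ≥0∞ := (eLpNorm gx 2 μD + 1) ^ 2 + (eLpNorm gy 2 μD + 1) ^ 2 with hMdef
  have hMlt : M < ⊤ := by
    have h1 : eLpNorm gx 2 μD < ⊤ := hgxmem.2
    have h2 : eLpNorm gy 2 μD < ⊤ := hgymem.2
    have h3 : eLpNorm gx 2 μD + 1 < ⊤ := ENNReal.add_lt_top.mpr ⟨h1, ENNReal.one_lt_top⟩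
    have h4 : eLpNorm gy 2 μD + 1 < ⊤ := ENNReal.add_lt_top.mpr ⟨h2, ENNReal.one_lt_top⟩
    exact ENNReal.add_lt_top.mpr ⟨ENNReal.pow_lt_top h3, ENNReal.pow_lt_top h4⟩
  have hQbound : ∀ᶠ k in atTop, ∫⁻ z, Q k z ≤ M := by
    have hb1 : ∀ᶠ n in atTop,
        eLpNorm (fun z => gx z - fderiv ℝ (φ n) z 1) 2 μD ≤ 1 := by
      filter_upwards [hφ1.eventually_lt_const zero_lt_one] with n hn using hn.le
    have hb2 : ∀ᶠ n in atTop,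
        eLpNorm (fun z => gy z - fderiv ℝ (φ n) z Complex.I) 2 μD ≤ 1 := by
      filter_upwards [hφ2.eventually_lt_const zero_lt_one] with n hn using hn.le
    have hcomp : Tendsto ns atTop atTop := hns_mono.tendsto_atTop
    filter_upwards [hcomp.eventually hb1, hcomp.eventually hb2] with k h1 h2
    have hzero : ∫⁻ z in unitDiskᶜ, Q k z = 0 := by
      have hall : ∀ z ∈ unitDiskᶜ, Q k z = (fun _ => (0:ℝ≥0∞)) z := by
        intro z hz
        have hfz : fderiv ℝ (φ (ns k)) z = 0 :=
          aux_fderiv_zero _ (hφprop (ns k)).2.2 z hz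
        simp [hQdef, hfz]
      rw [setLIntegral_congr_fun hDmeas.compl hall, lintegral_zero]
    have hsplit : ∫⁻ z, Q k z = ∫⁻ z in unitDisk, Q k z := by
      rw [← lintegral_add_compl (Q k) hDmeas, hzero, add_zero]
    have hmeas1 : Measurable fun z => ((‖fderiv ℝ (φ (ns k)) z 1‖₊ : ℝ≥0∞)) ^ 2 :=
      ((((hfc k).clm_apply continuous_const).measurable).nnnorm.coe_nnreal_ennreal.pow_const 2)
    have hQ1 : ∫⁻ z in unitDisk, Q k z =
        eLpNorm (fun z => fderiv ℝ (φ (ns k)) z 1) 2 μD ^ 2 +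
        eLpNorm (fun z => fderiv ℝ (φ (ns k)) z Complex.I) 2 μD ^ 2 := by
      rw [hQdef]
      rw [lintegral_add_left hmeas1]
      rw [aux_lintegral_sq_eq (fun z => fderiv ℝ (φ (ns k)) z 1) μD,
        aux_lintegral_sq_eq (fun z => fderiv ℝ (φ (ns k)) z Complex.I) μD]
    have hx1 : eLpNorm (fun z => fderiv ℝ (φ (ns k)) z 1) 2 μD ≤ eLpNorm gx 2 μD + 1 := by
      have heq : (fun z => fderiv ℝ (φ (ns k)) z 1)
          = gx - (gx - fun z => fderiv ℝ (φ (ns k)) z 1) := by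
        funext z; simp
      rw [heq]
      refine (eLpNorm_sub_le hgxmem.1
        (hgxmem.1.sub (((hfc k).clm_apply continuous_const).aestronglyMeasurable))
        (by norm_num)).trans ?_
      gcongr
      exact h1
    have hx2 : eLpNorm (fun z => fderiv ℝ (φ (ns k)) z Complex.I) 2 μD
        ≤ eLpNorm gy 2 μD + 1 := by
      have heq : (fun z => fderiv ℝ (φ (ns k)) z Complex.I)
          = gy - (gy - fun z => fderiv ℝ (φ (ns k)) z Complex.I) := by
        funext z; simp
      rw [heq]
      refine (eLpNorm_sub_le hgymem.1
        (hgymem.1.sub (((hfc k).clm_apply continuous_const).aestronglyMeasurable))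
        (by norm_num)).trans ?_
      gcongr
      exact h2
    rw [hsplit, hQ1, hMdef]
    exact add_le_add (by gcongr) (by gcongr)
  -- upper bound for the polar integrals
  have hupper : ∀ k, ∫⁻ s in Ioo (0:ℝ) r₀, G k s ≤ ∫⁻ z, Q k z := by
    intro k
    have hmeasq : Measurable (fun q : ℝ × ℝ => ENNReal.ofReal q.1 * Q k (circleMap p q.1 q.2)) :=
      (ENNReal.measurable_ofReal.comp measurable_fst).mul ((hQmeas k).comp hcm.measurable)
    calc ∫⁻ s in Ioo (0:ℝ) r₀, G k s
        = ∫⁻ s in Ioo (0:ℝ) r₀, ∫⁻ θ in Ioo (-π) π,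
            ENNReal.ofReal s * Q k (circleMap p s θ) := by
          refine lintegral_congr fun s => ?_
          exact (lintegral_const_mul' _ _ ENNReal.ofReal_ne_top).symm
      _ = ∫⁻ q in Ioo (0:ℝ) r₀ ×ˢ Ioo (-π) π,
            ENNReal.ofReal q.1 * Q k (circleMap p q.1 q.2) := by
          rw [show (volume : Measure (ℝ × ℝ)).restrict (Ioo (0:ℝ) r₀ ×ˢ Ioo (-π) π)
              = ((volume : Measure ℝ).restrict (Ioo (0:ℝ) r₀)).prod
                ((volume : Measure ℝ).restrict (Ioo (-π) π)) from
            (Measure.prod_restrict _ _).symm]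
          exact (lintegral_prod _ hmeasq.aemeasurable).symm
      _ = ∫⁻ q in Ioo (0:ℝ) r₀ ×ˢ Ioo (-π) π,
            ENNReal.ofReal q.1 * Q k (p + Complex.polarCoord.symm q) := by
          refine lintegral_congr fun q => ?_
          rw [← aux_T_eq_circleMap p q.1 q.2]
      _ ≤ ∫⁻ z, Q k z := aux_polar_lintegral_le p (Q k) (hQmeas k) r₀
  -- slicing of the null set over circles
  have hslice := aux_polar_ae_slices p N' hN'meas hN'null r₀
  have hae_s : ∀ᵐ s ∂(volume.restrict (Ioo (0:ℝ) r₀)),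
      ∀ᵐ θ ∂(volume.restrict (Ioo (-π) π)), circleMap p s θ ∉ N' := by
    filter_upwards [hslice] with s hs
    filter_upwards [hs] with θ hθ
    rwa [aux_T_eq_circleMap] at hθ
  set c : ℝ := (δ/5)^2 / (8*π) with hcdef
  have hcpos : 0 < c := by
    have : (0:ℝ) < π := Real.pi_pos
    positivity
  -- the key a.e. lower bound
  have hlowerae : ∀ᵐ s ∂(volume.restrict (Ioo (0:ℝ) r₀)),
      ENNReal.ofReal (c / s) ≤ liminf (fun k => G k s) atTop := by
    filter_upwards [hae_s, ae_restrict_mem measurableSet_Ioo] with s hsae hsmem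
    obtain ⟨z, hzV, hzd⟩ := hcircle s hsmem
    obtain ⟨θ₁, hθ₁mem, hθ₁V⟩ := aux_exists_angle V hVopen p z s hsmem.1 hzV hzd
    set O : Set ℝ := Ioo (-π) π ∩ (fun θ => circleMap p s θ) ⁻¹' V with hOdef
    have hOopen : IsOpen O := isOpen_Ioo.inter (hVopen.preimage (continuous_circleMap p s))
    have hOne : O.Nonempty := ⟨θ₁, hθ₁mem, hθ₁V⟩
    have hOpos : 0 < volume O := hOopen.measure_pos volume hOne
    have hbad : volume.restrict (Ioo (-π) π) {θ | circleMap p s θ ∈ N'} = 0 := by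
      have := hsae
      rw [ae_iff] at this
      simpa [not_not] using this
    have hgood : ∃ θstar ∈ O, circleMap p s θstar ∉ N' := by
      by_contra hcon
      push_neg at hcon
      have hOsub : O ⊆ {θ | circleMap p s θ ∈ N'} := fun θ hθ => hcon θ hθ
      have hO0 : volume.restrict (Ioo (-π) π) O = 0 := measure_mono_null hOsub hbad
      rw [Measure.restrict_apply' measurableSet_Ioo,
        inter_eq_self_of_subset_left (hOdef ▸ inter_subset_left)] at hO0
      exact absurd hO0 hOpos.ne'
    obtain ⟨θstar, hθstarO, hθstarN⟩ := hgood
    have hzV' : circleMap p s θstar ∈ V := hθstarO.2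
    have hz𝔻 : circleMap p s θstar ∈ unitDisk := hVsub hzV'
    have hconv : Tendsto (fun i => φ (ns i) (circleMap p s θstar)) atTop
        (𝓝 (u (circleMap p s θstar))) := by
      have hnotN : circleMap p s θstar ∉ N := fun hmem => hθstarN (hNsub hmem)
      have hPP : ¬ ¬ (circleMap p s θstar ∈ unitDisk →
          Tendsto (fun i => φ (ns i) (circleMap p s θstar)) atTop
            (𝓝 (u (circleMap p s θstar)))) := hnotN
      exact (not_not.mp hPP) hz𝔻
    have hδ4 : δ/4 < ‖u (circleMap p s θstar)‖ := hzV'.2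
    have hev : ∀ᶠ i in atTop, δ/5 < ‖φ (ns i) (circleMap p s θstar)‖ :=
      (hconv.norm).eventually_const_lt (by linarith)
    refine le_liminf_of_le (by isBoundedDefault) ?_
    filter_upwards [hev] with i hi
    have hkey := aux_circle_bound (φ (ns i)) (hφprop (ns i)).1 (hφprop (ns i)).2.2 p hp1 s
      hsmem.1 θstar ⟨hθstarO.1.1, hθstarO.1.2⟩
    have hkey' : (‖φ (ns i) (circleMap p s θstar)‖₊ : ℝ≥0∞) ^ 2
        ≤ ENNReal.ofReal (8 * π * s ^ 2) * ρ i s := hkey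
    have h1 : ENNReal.ofReal ((δ/5)^2) ≤ (‖φ (ns i) (circleMap p s θstar)‖₊ : ℝ≥0∞) ^ 2 := by
      rw [← enorm_eq_nnnorm, ← ofReal_norm, ← ENNReal.ofReal_pow (norm_nonneg _)]
      refine ENNReal.ofReal_le_ofReal ?_
      have hd5 : (0:ℝ) ≤ δ/5 := by linarith
      nlinarith [hi]
    have h2 : ENNReal.ofReal ((δ/5)^2) ≤ ENNReal.ofReal (8*π*s^2) * ρ i s := h1.trans hkey'
    have h8pos : (0:ℝ) < 8*π*s^2 := by
      have : (0:ℝ) < π := Real.pi_pos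
      have := hsmem.1
      positivity
    have hne0 : ENNReal.ofReal (8*π*s^2) ≠ 0 := by
      simp only [ne_eq, ENNReal.ofReal_eq_zero, not_le]
      exact h8pos
    have hnet : ENNReal.ofReal (8*π*s^2) ≠ ⊤ := ENNReal.ofReal_ne_top
    rw [← ENNReal.mul_le_mul_iff_left hne0 hnet]
    have hsne : s ≠ 0 := hsmem.1.ne'
    calc ENNReal.ofReal (c/s) * ENNReal.ofReal (8*π*s^2)
        = ENNReal.ofReal (s * (δ/5)^2) := by
          rw [← ENNReal.ofReal_mul (div_nonneg hcpos.le hsmem.1.le)]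
          congr 1
          rw [hcdef]
          field_simp
      _ = ENNReal.ofReal s * ENNReal.ofReal ((δ/5)^2) := ENNReal.ofReal_mul hsmem.1.le
      _ ≤ ENNReal.ofReal s * (ENNReal.ofReal (8*π*s^2) * ρ i s) := by gcongr
      _ = G i s * ENNReal.ofReal (8*π*s^2) := by rw [hGdef]; ring
  -- the contradiction
  have hfinal : (⊤:ℝ≥0∞) ≤ M := by
    calc (⊤:ℝ≥0∞) = ∫⁻ s in Ioo (0:ℝ) r₀, ENNReal.ofReal (c / s) :=
          (aux_lintegral_inv_top r₀ hr₀pos c hcpos).symm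
      _ ≤ ∫⁻ s in Ioo (0:ℝ) r₀, liminf (fun k => G k s) atTop := lintegral_mono_ae hlowerae
      _ ≤ liminf (fun k => ∫⁻ s in Ioo (0:ℝ) r₀, G k s) atTop := lintegral_liminf_le hGmeas
      _ ≤ liminf (fun k => ∫⁻ z, Q k z) atTop :=
          liminf_le_liminf (Filter.Eventually.of_forall hupper)
      _ ≤ M := liminf_le_of_frequently_le' hQbound.frequently
  exact absurd (top_le_iff.mp hfinal) hMlt.ne


end
end

section
/- Let f : 𝔻 → ℂ be a continuous map on the open unit disk, let y ∈ ℂ, and let K be a connected component of f⁻¹{y} with closure(K) ⊂ 𝔻. Then there exists r_K > 0 such that for every r ∈ (0, r_K), the connected component U_r of f⁻¹(B²(y, r)) containing K satisfies closure(U_r) ⊂ 𝔻. -/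
open MeasureTheory Metric Set Filter Topology


lemma aux_clopen_component {X : Type*} [TopologicalSpace X] [T2Space X] [CompactSpace X]
    (x : X) {U : Set X} (hU : IsOpen U) (hcc : connectedComponent x ⊆ U) :
    ∃ V : Set X, IsClopen V ∧ x ∈ V ∧ V ⊆ U := by
  have h := connectedComponent_eq_iInter_isClopen x
  have hdisj : (Uᶜ ∩ ⋂ s : {s : Set X // IsClopen s ∧ x ∈ s}, (s : Set X)) = ∅ := by
    rw [← h, ← disjoint_iff_inter_eq_empty]
    exact disjoint_compl_left_iff_subset.2 hcc
  obtain ⟨t, ht⟩ := hU.isClosed_compl.isCompact.elim_finite_subfamily_closed _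
    (fun s => s.2.1.1) hdisj
  refine ⟨⋂ s ∈ t, (s : Set X), isClopen_biInter_finset (fun s _ => s.2.1),
    mem_iInter₂.2 (fun s _ => s.2.2), ?_⟩
  intro z hz
  by_contra hzU
  exact absurd ht (Set.Nonempty.ne_empty ⟨z, hzU, hz⟩)

lemma aux_frontier {α : Type*} [TopologicalSpace α] {s W : Set α}
    (hs : IsPreconnected s) (hW : IsOpen W)
    (h1 : (s ∩ W).Nonempty) (h2 : (s \ W).Nonempty) : (s ∩ frontier W).Nonempty := by
  by_contra hempty
  push_neg at hempty
  have hcover : s ⊆ W ∪ (closure W)ᶜ := by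
    intro z hz
    by_cases hzW : z ∈ W
    · exact Or.inl hzW
    · refine Or.inr fun hcl => ?_
      have : z ∈ s ∩ frontier W := ⟨hz, hcl, by rwa [hW.interior_eq]⟩
      simp [hempty] at this
  obtain ⟨w, hws, hw1, hw2⟩ := hs W (closure W)ᶜ hW isClosed_closure.isOpen_compl hcover h1
    (h2.imp fun z hz => ⟨hz.1, fun hcl => (by
      have : z ∈ s ∩ frontier W := ⟨hz.1, hcl, by rw [hW.interior_eq]; exact hz.2⟩
      simp [hempty] at this : False)⟩)
  exact hw2 (subset_closure hw1)


noncomputable section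

/-- If `K` is a connected component of `f⁻¹{y}` with `closure K ⊆ 𝔻`, then for all
sufficiently small `r > 0`, the component of `f⁻¹(B²(y,r))` containing `K` also has
closure contained in `𝔻`. -/
theorem small_radius_component_in_disk
    (f : ℂ → ℂ) (hf : ContinuousOn f unitDisk) (y : ℂ)
    (x : ℂ) (hx : x ∈ unitDisk ∩ f ⁻¹' {y})
    (hK : closure (connectedComponentIn (unitDisk ∩ f ⁻¹' {y}) x) ⊆ unitDisk) :
    ∃ rK > 0, ∀ r ∈ Set.Ioo (0 : ℝ) rK,
      closure (connectedComponentIn (unitDisk ∩ f ⁻¹' Metric.ball y r) x) ⊆ unitDisk := by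
  set S := unitDisk ∩ f ⁻¹' {y} with hS
  set K := connectedComponentIn S x with hKdef
  have hxS : x ∈ S := hx
  have hxK : x ∈ K := mem_connectedComponentIn hxS
  have hKsub : K ⊆ S := connectedComponentIn_subset _ _
  have hKpc : IsPreconnected K := isPreconnected_connectedComponentIn
  have hfy : ∀ z ∈ closure K, z ∈ S := by
    intro z hz
    have hzD : z ∈ unitDisk := hK hz
    refine ⟨hzD, ?_⟩
    have hct : ContinuousWithinAt f K z := (hf z hzD).mono (fun w hw => (hKsub hw).1)
    have hne : (𝓝[K] z).NeBot := mem_closure_iff_nhdsWithin_neBot.1 hz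
    have h2 : Tendsto f (𝓝[K] z) (𝓝 y) := by
      refine Tendsto.congr' ?_ tendsto_const_nhds
      filter_upwards [self_mem_nhdsWithin] with w hw
      exact (mem_singleton_iff.1 (hKsub hw).2).symm
    have : f z = y := tendsto_nhds_unique hct h2
    simpa [mem_preimage] using this
  have hKcl : IsClosed K := by
    have h := (hKpc.closure).subset_connectedComponentIn (subset_closure hxK) hfy
    exact isClosed_of_closure_subset h
  have hKb : Bornology.IsBounded K :=
    (isBounded_ball (x := (0:ℂ)) (r := 1)).subset (fun z hz => (hKsub hz).1)
  have hKcomp : IsCompact K := isCompact_iff_isClosed_bounded.2 ⟨hKcl, hKb⟩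
  obtain ⟨z₀, hz₀K, hmax⟩ := hKcomp.exists_isMaxOn ⟨x, hxK⟩ continuous_norm.continuousOn
  have hz₀lt : ‖z₀‖ < 1 := by
    have := (hKsub hz₀K).1
    simpa [unitDisk, mem_ball, dist_zero_right] using this
  set ρ : ℝ := (‖z₀‖ + 1) / 2 with hρdef
  have hρ1 : ρ < 1 := by rw [hρdef]; linarith
  have hρ0 : 0 < ρ := by have := norm_nonneg z₀; rw [hρdef]; linarith
  have hKρ : K ⊆ ball (0:ℂ) ρ := by
    intro z hz
    simp only [mem_ball, dist_zero_right]
    have hle : ‖z‖ ≤ ‖z₀‖ := hmax hz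
    rw [hρdef]; linarith
  have hballD : closedBall (0:ℂ) ρ ⊆ unitDisk := closedBall_subset_ball hρ1
  set C := closedBall (0:ℂ) ρ ∩ f ⁻¹' {y} with hC
  have hCcl : IsClosed C := (hf.mono hballD).preimage_isClosed_of_isClosed
    isClosed_closedBall isClosed_singleton
  have hCcomp : IsCompact C :=
    (isCompact_closedBall (0:ℂ) ρ).of_isClosed_subset hCcl inter_subset_left
  have hCS : C ⊆ S := fun z hz => ⟨hballD hz.1, hz.2⟩
  have hxC : x ∈ C := ⟨ball_subset_closedBall (hKρ hxK), hx.2⟩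
  have hcompC : connectedComponentIn C x ⊆ ball (0:ℂ) ρ :=
    (isPreconnected_connectedComponentIn.subset_connectedComponentIn
      (mem_connectedComponentIn hxC) ((connectedComponentIn_subset C x).trans hCS)).trans hKρ
  haveI : CompactSpace ↥C := isCompact_iff_compactSpace.mp hCcomp
  set x' : ↥C := ⟨x, hxC⟩ with hx'
  have hccx' : connectedComponent x' ⊆ (Subtype.val ⁻¹' (ball (0:ℂ) ρ) : Set ↥C) := by
    intro z hz
    have hzm : (z : ℂ) ∈ connectedComponentIn C x := by
      rw [connectedComponentIn_eq_image hxC]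
      exact ⟨z, hz, rfl⟩
    exact hcompC hzm
  obtain ⟨V, hVclopen, hxV, hVsub⟩ := aux_clopen_component x'
    (isOpen_ball.preimage continuous_subtype_val) hccx'
  set A : Set ℂ := Subtype.val '' V with hA
  set B : Set ℂ := Subtype.val '' (Vᶜ) with hB
  have hAcomp : IsCompact A := (hVclopen.1.isCompact).image continuous_subtype_val
  have hBcomp : IsCompact B := (hVclopen.2.isClosed_compl.isCompact).image continuous_subtype_val
  have hABdisj : Disjoint A B :=
    (Set.disjoint_image_iff Subtype.val_injective).2 disjoint_compl_right
  have hAsub : A ⊆ ball (0:ℂ) ρ := by rintro z ⟨a, haV, rfl⟩; exact hVsub haV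
  have hAunion : ∀ z ∈ C, z ∈ A ∨ z ∈ B := by
    intro z hz
    by_cases h : (⟨z, hz⟩ : ↥C) ∈ V
    · exact Or.inl ⟨_, h, rfl⟩
    · exact Or.inr ⟨_, h, rfl⟩
  have hopen : IsOpen (ball (0:ℂ) ρ ∩ Bᶜ) := isOpen_ball.inter hBcomp.isClosed.isOpen_compl
  have hAsub2 : A ⊆ ball (0:ℂ) ρ ∩ Bᶜ :=
    fun z hz => ⟨hAsub hz, fun hzB => Set.disjoint_left.1 hABdisj hz hzB⟩
  obtain ⟨L, hLcomp, hALint, hLsub⟩ := exists_compact_between hAcomp hopen hAsub2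
  set W := interior L with hWdef
  have hclW : closure W ⊆ L := closure_minimal interior_subset hLcomp.isClosed
  have hxW : x ∈ W := hALint ⟨x', hxV, rfl⟩
  have hWρ : closure W ⊆ ball (0:ℂ) ρ := fun z hz => (hLsub (hclW hz)).1
  have hfrW : frontier W ⊆ closure W := frontier_subset_closure
  have hfront_ne : ∀ z ∈ frontier W, f z ≠ y := by
    intro z hz hfz
    have hzC : z ∈ C := ⟨ball_subset_closedBall (hWρ (hfrW hz)), by simpa [mem_preimage] using hfz⟩
    rcases hAunion z hzC with hzA | hzB
    · exact hz.2 (by rw [hWdef, interior_interior]; exact hALint hzA)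
    · exact (hLsub (hclW (hfrW hz))).2 hzB
  have hWne : W.Nonempty := ⟨x, hxW⟩
  have hWnu : W ≠ univ := by
    intro h
    have h2 : (2:ℂ) ∈ ball (0:ℂ) ρ := hWρ (subset_closure (h ▸ mem_univ (2:ℂ)))
    rw [mem_ball, dist_zero_right] at h2
    have : ‖(2:ℂ)‖ = 2 := by norm_num
    rw [this] at h2; linarith
  have hTcomp : IsCompact (frontier W) :=
    hLcomp.of_isClosed_subset isClosed_frontier (hfrW.trans hclW)
  have hTne : (frontier W).Nonempty := nonempty_frontier_iff.2 ⟨hWne, hWnu⟩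
  have hTD : frontier W ⊆ unitDisk := fun z hz => ball_subset_ball hρ1.le (hWρ (hfrW hz))
  have hcont : ContinuousOn (fun z => dist y (f z)) (frontier W) :=
    (continuous_const.dist continuous_id).comp_continuousOn (hf.mono hTD)
  obtain ⟨z₁, hz₁T, hmin⟩ := hTcomp.exists_isMinOn hTne hcont
  refine ⟨dist y (f z₁), dist_pos.2 (fun h => hfront_ne z₁ hz₁T h.symm), fun r hr => ?_⟩
  set Sr := unitDisk ∩ f ⁻¹' ball y r with hSr
  have hxSr : x ∈ Sr := by
    refine ⟨hx.1, ?_⟩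
    have hfx : f x = y := hx.2
    simp only [mem_preimage, hfx]
    exact mem_ball_self hr.1
  have hUrW : connectedComponentIn Sr x ⊆ W := by
    intro z hz
    by_contra hzW
    obtain ⟨w, hwU, hwF⟩ := aux_frontier isPreconnected_connectedComponentIn isOpen_interior
      ⟨x, mem_connectedComponentIn hxSr, hxW⟩ ⟨z, hz, hzW⟩
    have h1 : dist (f w) y < r := by
      have := (connectedComponentIn_subset Sr x hwU).2
      simpa [mem_ball] using this
    have h2 : dist y (f z₁) ≤ dist y (f w) := hmin hwF
    rw [dist_comm y (f w)] at h2
    have := hr.2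
    linarith
  calc closure (connectedComponentIn Sr x) ⊆ closure W := closure_mono hUrW
    _ ⊆ ball (0:ℂ) ρ := hWρ
    _ ⊆ unitDisk := ball_subset_ball hρ1.le


end
end
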